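/- arXiv:1908.03172 — 8 statements merged into one kernel-verified Lean document; each statement's English description precedes it below -/
import Mathlib

section
/- Let G be a finite simple graph, let x and y be adjacent vertices of G with deg(x) ≤ 4 and deg(y) ≤ 4, and suppose that the graph G − xy obtained from G by deleting the edge xy is (3,4)-colorable. Then G is (3,4)-colorable. -/
/-- The degree of a vertex: the number of its neighbors. -/
noncomputable def degN {V : Type*} (G : SimpleGraph V) (v : V) : ℕ :=
  {w | G.Adj v w}.ncard

/-- `c` is a (3,4)-coloring of `G`: every vertex gets value 3 or 4, and every
vertex with value `i` has at most `i` neighbors with value `i`. -/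
def IsColoring34 {V : Type*} (G : SimpleGraph V) (c : V → ℕ) : Prop :=
  (∀ v, c v = 3 ∨ c v = 4) ∧ ∀ v, {w | G.Adj v w ∧ c w = c v}.ncard ≤ c v

/-- `G` is (3,4)-colorable. -/
def Colorable34 {V : Type*} (G : SimpleGraph V) : Prop :=
  ∃ c, IsColoring34 G c

/-- The graph `G − v` obtained by deleting the vertex `v` and its incident edges
(keeping `v` as an isolated vertex, which does not affect (3,4)-colorability). -/
def deleteVert {V : Type*} (G : SimpleGraph V) (v : V) : SimpleGraph V where
  Adj a b := G.Adj a b ∧ a ≠ v ∧ b ≠ v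
  symm := ⟨fun _ _ ⟨h, ha, hb⟩ => ⟨h.symm, hb, ha⟩⟩
  loopless := ⟨fun a ⟨h, _, _⟩ => G.loopless.irrefl a h⟩

/-- `G` is minimally non-(3,4)-colorable. -/
def MinNonColorable34 {V : Type*} (G : SimpleGraph V) : Prop :=
  ¬ Colorable34 G ∧ (∀ v, Colorable34 (deleteVert G v)) ∧
    ∀ e ∈ G.edgeSet, Colorable34 (G.deleteEdges {e})

/-- `u` is `i`-saturated under the coloring `c` of the graph `G`. -/
def Saturated34 {V : Type*} (G : SimpleGraph V) (c : V → ℕ) (i : ℕ) (u : V) : Prop :=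
  c u = i ∧ {w | G.Adj u w ∧ c w = i}.ncard = i

/-- `u` can be recolored: changing the color of `u` to the other color
(`7 - c u` swaps 3 and 4) again yields a (3,4)-coloring of `G`. -/
def Recolorable34 {V : Type*} [DecidableEq V] (G : SimpleGraph V) (c : V → ℕ) (u : V) : Prop :=
  IsColoring34 G (Function.update c u (7 - c u))

/-- The number of 3^+-neighbors of `x` in `G` (neighbors of degree at least 3). -/
noncomputable def tpn {V : Type*} (G : SimpleGraph V) (x : V) : ℕ :=
  {w | G.Adj x w ∧ 3 ≤ degN G w}.ncard

/-- A 5p-vertex (poor 5-vertex): degree 5 with exactly one 3^+-neighbor. -/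
def Is5p {V : Type*} (G : SimpleGraph V) (x : V) : Prop := degN G x = 5 ∧ tpn G x = 1

/-- A 5s-vertex (semi-poor 5-vertex): degree 5 with exactly two 3^+-neighbors. -/
def Is5s {V : Type*} (G : SimpleGraph V) (x : V) : Prop := degN G x = 5 ∧ tpn G x = 2

/-- A 6p-vertex (poor 6-vertex): degree 6 with exactly one 3^+-neighbor. -/
def Is6p {V : Type*} (G : SimpleGraph V) (x : V) : Prop := degN G x = 6 ∧ tpn G x = 1

/-- `G` has girth at least 5: no 3-cycles and no 4-cycles. -/
def GirthAtLeast5 {V : Type*} (G : SimpleGraph V) : Prop :=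
  (∀ a b c : V, G.Adj a b → G.Adj b c → ¬ G.Adj c a) ∧
  (∀ a b c d : V, a ≠ c → b ≠ d →
    G.Adj a b → G.Adj b c → G.Adj c d → ¬ G.Adj d a)

/-- Auxiliary: if `c` colors `G − xy`, `c x = 3`, and all `G`-neighbors of `x` are
colored 3, then recoloring `x` to 4 gives a coloring of `G`. -/
lemma aux34 {V : Type*} [Fintype V] (G : SimpleGraph V) (x y : V) (c : V → ℕ)
    (hc : IsColoring34 (G.deleteEdges {s(x, y)}) c)
    (hall : ∀ w, G.Adj x w → c w = 3) :
    Colorable34 G := by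
  classical
  obtain ⟨h34, hcnt⟩ := hc
  refine ⟨Function.update c x 4, ?_, ?_⟩
  · intro v
    by_cases hv : v = x
    · rw [hv]; simp
    · rw [Function.update_of_ne hv]; exact h34 v
  · intro v
    by_cases hv : v = x
    · rw [hv]
      have he : {w | G.Adj x w ∧ Function.update c x 4 w = Function.update c x 4 x} = ∅ := by
        ext w
        simp only [Set.mem_setOf_eq, Set.mem_empty_iff_false, iff_false, not_and]
        intro hadj hq
        have hwx : w ≠ x := fun h => G.loopless.irrefl x (h ▸ hadj)
        rw [Function.update_self, Function.update_of_ne hwx] at hq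
        have := hall w hadj
        omega
      rw [he, Set.ncard_empty, Function.update_self]
      omega
    · rw [Function.update_of_ne hv]
      have hsub : {w | G.Adj v w ∧ Function.update c x 4 w = c v}
          ⊆ {w | (G.deleteEdges {s(x, y)}).Adj v w ∧ c w = c v} := by
        rintro w ⟨hadj, hq⟩
        have hwx : w ≠ x := by
          rintro rfl
          rw [Function.update_self] at hq
          have := hall v hadj.symm
          omega
        rw [Function.update_of_ne hwx] at hq
        refine ⟨?_, hq⟩
        rw [SimpleGraph.deleteEdges_adj]
        refine ⟨hadj, ?_⟩
        simp only [Set.mem_singleton_iff, Sym2.eq_iff]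
        rintro (⟨rfl, rfl⟩ | ⟨rfl, rfl⟩)
        · exact hv rfl
        · exact hwx rfl
      exact le_trans (Set.ncard_le_ncard hsub (Set.toFinite _)) (hcnt v)

/-- Auxiliary: for a vertex `v` not in `{x, y}`, its same-colored neighborhood in `G`
is contained in that in `G − xy`. -/
lemma nbrsub34 {V : Type*} (G : SimpleGraph V) (x y v : V) (c : V → ℕ)
    (hvx : v ≠ x) (hvy : v ≠ y) :
    {w | G.Adj v w ∧ c w = c v} ⊆ {w | (G.deleteEdges {s(x, y)}).Adj v w ∧ c w = c v} := by
  rintro w ⟨hadj, hq⟩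
  refine ⟨?_, hq⟩
  rw [SimpleGraph.deleteEdges_adj]
  refine ⟨hadj, ?_⟩
  simp only [Set.mem_singleton_iff, Sym2.eq_iff]
  rintro (⟨rfl, rfl⟩ | ⟨rfl, rfl⟩)
  · exact hvx rfl
  · exact hvy rfl

/-- If `x, y` are adjacent vertices of a finite simple graph `G`, both of
degree at most 4, and `G − xy` is (3,4)-colorable, then `G` is (3,4)-colorable. -/
theorem stmt_0 {V : Type*} [Fintype V] (G : SimpleGraph V) (x y : V)
    (hadj : G.Adj x y) (hx : degN G x ≤ 4) (hy : degN G y ≤ 4)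
    (h : Colorable34 (G.deleteEdges {s(x, y)})) :
    Colorable34 G := by
  classical
  obtain ⟨c, h34, hcnt⟩ := h
  -- helper: bound for vertices outside {x, y}
  have hout : ∀ v, v ≠ x → v ≠ y → {w | G.Adj v w ∧ c w = c v}.ncard ≤ c v := fun v hvx hvy =>
    le_trans (Set.ncard_le_ncard (nbrsub34 G x y v c hvx hvy) (Set.toFinite _)) (hcnt v)
  by_cases hne : c x = c y
  · -- same color
    rcases h34 x with h3 | h4
    · -- both colored 3
      by_cases hx4 : {w | G.Adj x w ∧ c w = c x}.ncard ≤ 3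
      · by_cases hy4 : {w | G.Adj y w ∧ c w = c y}.ncard ≤ 3
        · refine ⟨c, h34, fun v => ?_⟩
          by_cases hvx : v = x
          · rw [hvx]; omega
          by_cases hvy : v = y
          · rw [hvy]; omega
          · exact hout v hvx hvy
        · -- y is saturated: all its neighbors are colored 3
          have hsub : {w | G.Adj y w ∧ c w = c y} ⊆ {w | G.Adj y w} := fun w hw => hw.1
          have heq : {w | G.Adj y w ∧ c w = c y} = {w | G.Adj y w} := by
            apply Set.eq_of_subset_of_ncard_le hsub _ (Set.toFinite _)
            have hy' : {w | G.Adj y w}.ncard ≤ 4 := hy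
            omega
          have hall : ∀ w, G.Adj y w → c w = 3 := by
            intro w hw
            have : w ∈ {w | G.Adj y w ∧ c w = c y} := heq ▸ hw
            rw [← hne, h3] at this; exact this.2
          have hG : G.deleteEdges {s(x, y)} = G.deleteEdges {s(y, x)} := by
            rw [Sym2.eq_swap]
          exact aux34 G y x c (hG ▸ ⟨h34, hcnt⟩) hall
      · -- x is saturated: all its neighbors are colored 3
        have hsub : {w | G.Adj x w ∧ c w = c x} ⊆ {w | G.Adj x w} := fun w hw => hw.1
        have heq : {w | G.Adj x w ∧ c w = c x} = {w | G.Adj x w} := by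
          apply Set.eq_of_subset_of_ncard_le hsub _ (Set.toFinite _)
          have hx' : {w | G.Adj x w}.ncard ≤ 4 := hx
          omega
        have hall : ∀ w, G.Adj x w → c w = 3 := by
          intro w hw
          have : w ∈ {w | G.Adj x w ∧ c w = c x} := heq ▸ hw
          rw [h3] at this; exact this.2
        exact aux34 G x y c ⟨h34, hcnt⟩ hall
    · -- both colored 4: degree bound suffices
      refine ⟨c, h34, fun v => ?_⟩
      by_cases hvx : v = x
      · rw [hvx]
        refine le_trans (Set.ncard_le_ncard (t := {w | G.Adj x w}) (fun w hw => hw.1) (Set.toFinite _)) ?_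
        have hx' : {w | G.Adj x w}.ncard ≤ 4 := hx
        omega
      by_cases hvy : v = y
      · rw [hvy]
        refine le_trans (Set.ncard_le_ncard (t := {w | G.Adj y w}) (fun w hw => hw.1) (Set.toFinite _)) ?_
        have hy' : {w | G.Adj y w}.ncard ≤ 4 := hy
        omega
      · exact hout v hvx hvy
  · -- different colors: c still works for G
    refine ⟨c, h34, fun v => ?_⟩
    have hsub : {w | G.Adj v w ∧ c w = c v} ⊆ {w | (G.deleteEdges {s(x, y)}).Adj v w ∧ c w = c v} := by
      rintro w ⟨hadjw, hq⟩
      refine ⟨?_, hq⟩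
      rw [SimpleGraph.deleteEdges_adj]
      refine ⟨hadjw, ?_⟩
      simp only [Set.mem_singleton_iff, Sym2.eq_iff]
      rintro (⟨rfl, rfl⟩ | ⟨rfl, rfl⟩)
      · exact hne hq.symm
      · exact hne hq
    exact le_trans (Set.ncard_le_ncard hsub (Set.toFinite _)) (hcnt v)
end

section
/- Let G be a minimally non-(3,4)-colorable graph. Then every edge of G has an endpoint of degree at least 5. -/
lemma adj_del' {V : Type*} (G : SimpleGraph V) (x y v w : V) :
    (G.deleteEdges {s(x, y)}).Adj v w ↔
      G.Adj v w ∧ ¬((v = x ∧ w = y) ∨ (v = y ∧ w = x)) := by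
  simp [SimpleGraph.deleteEdges_adj, Sym2.eq_iff]

lemma key34 {V : Type*} [Fintype V] (G : SimpleGraph V) (x y : V) (hxy : G.Adj x y)
    (hx : degN G x ≤ 4) (c : V → ℕ)
    (hc : IsColoring34 (G.deleteEdges {s(x, y)}) c)
    (hcx : c x = 3)
    (hsat : 4 ≤ {w | G.Adj x w ∧ c w = 3}.ncard) : Colorable34 G := by
  classical
  have hsub : {w | G.Adj x w ∧ c w = 3} ⊆ {w | G.Adj x w} := fun w hw => hw.1
  have heq : {w | G.Adj x w ∧ c w = 3} = {w | G.Adj x w} :=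
    Set.eq_of_subset_of_ncard_le hsub (le_trans hx hsat) (Set.toFinite _)
  have hall : ∀ w, G.Adj x w → c w = 3 := by
    intro w hw
    have : w ∈ {w | G.Adj x w ∧ c w = 3} := heq ▸ hw
    exact this.2
  refine ⟨Function.update c x 4, ?_, ?_⟩
  · intro v
    rcases eq_or_ne x v with rfl | hv0
    · right; simp
    · have hv : v ≠ x := hv0.symm
      simp [Function.update_of_ne hv]; exact hc.1 v
  · intro v
    rcases eq_or_ne x v with rfl | hv0
    · have hempty : {w | G.Adj x w ∧ Function.update c x 4 w = Function.update c x 4 x} = ∅ := by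
        ext w
        simp only [Set.mem_setOf_eq, Set.mem_empty_iff_false, iff_false]
        rintro ⟨hw, hcw⟩
        have hwx : w ≠ x := fun h => G.loopless.irrefl x (h ▸ hw)
        rw [Function.update_of_ne hwx, Function.update_self, hall w hw] at hcw
        omega
      rw [hempty]; simp
    · have hv : v ≠ x := hv0.symm
      rw [Function.update_of_ne hv]
      by_cases hadj : G.Adj v x
      · have hcv : c v = 3 := hall v (G.symm.symm _ _ hadj)
        rw [hcv]
        have hsub2 : {w | G.Adj v w ∧ Function.update c x 4 w = 3} ⊆
            {w | (G.deleteEdges {s(x, y)}).Adj v w ∧ c w = 3} := by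
          rintro w ⟨hw, hcw⟩
          have hwx : w ≠ x := by
            rintro rfl; rw [Function.update_self] at hcw; omega
          rw [Function.update_of_ne hwx] at hcw
          refine ⟨(adj_del' G x y v w).2 ⟨hw, ?_⟩, hcw⟩
          rintro (⟨rfl, rfl⟩ | ⟨rfl, rfl⟩)
          · exact hv rfl
          · exact hwx rfl
        calc {w | G.Adj v w ∧ Function.update c x 4 w = 3}.ncard
            ≤ {w | (G.deleteEdges {s(x, y)}).Adj v w ∧ c w = 3}.ncard :=
              Set.ncard_le_ncard hsub2 (Set.toFinite _)
          _ ≤ 3 := by have := hc.2 v; rw [hcv] at this; exact this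
      · have hvy : v ≠ y := by rintro rfl; exact hadj (G.symm.symm _ _ hxy)
        have hsub2 : {w | G.Adj v w ∧ Function.update c x 4 w = c v} ⊆
            {w | (G.deleteEdges {s(x, y)}).Adj v w ∧ c w = c v} := by
          rintro w ⟨hw, hcw⟩
          have hwx : w ≠ x := by rintro rfl; exact hadj hw
          rw [Function.update_of_ne hwx] at hcw
          refine ⟨(adj_del' G x y v w).2 ⟨hw, ?_⟩, hcw⟩
          rintro (⟨rfl, rfl⟩ | ⟨rfl, rfl⟩)
          · exact hv rfl
          · exact hvy rfl
        calc {w | G.Adj v w ∧ Function.update c x 4 w = c v}.ncard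
            ≤ {w | (G.deleteEdges {s(x, y)}).Adj v w ∧ c w = c v}.ncard :=
              Set.ncard_le_ncard hsub2 (Set.toFinite _)
          _ ≤ c v := hc.2 v

/-- In a minimally non-(3,4)-colorable graph, every edge has an
endpoint of degree at least 5. -/
theorem stmt_1 {V : Type*} [Fintype V] (G : SimpleGraph V)
    (hG : MinNonColorable34 G) :
    ∀ x y : V, G.Adj x y → 5 ≤ degN G x ∨ 5 ≤ degN G y := by
  classical
  intro x y hxy
  by_contra h
  push_neg at h
  obtain ⟨hx5, hy5⟩ := h
  have hx : degN G x ≤ 4 := by omega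
  have hy : degN G y ≤ 4 := by omega
  have hmem : s(x, y) ∈ G.edgeSet := hxy
  obtain ⟨c, hc⟩ := hG.2.2 _ hmem
  apply hG.1
  have hbound : ∀ v, v ≠ x → v ≠ y → {w | G.Adj v w ∧ c w = c v}.ncard ≤ c v := by
    intro v hvx hvy
    have hss : {w | G.Adj v w ∧ c w = c v} ⊆
        {w | (G.deleteEdges {s(x, y)}).Adj v w ∧ c w = c v} := by
      rintro w ⟨hw, hcw⟩
      refine ⟨(adj_del' G x y v w).2 ⟨hw, ?_⟩, hcw⟩
      rintro (⟨rfl, _⟩ | ⟨rfl, _⟩)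
      · exact hvx rfl
      · exact hvy rfl
    exact le_trans (Set.ncard_le_ncard hss (Set.toFinite _)) (hc.2 v)
  have hdegbound : ∀ v : V, {w | G.Adj v w ∧ c w = c v}.ncard ≤ degN G v := by
    intro v
    exact Set.ncard_le_ncard (fun w hw => hw.1) (Set.toFinite _)
  rcases ne_or_eq (c x) (c y) with hne | heq
  · refine ⟨c, hc.1, fun v => ?_⟩
    have hss : {w | G.Adj v w ∧ c w = c v} ⊆
        {w | (G.deleteEdges {s(x, y)}).Adj v w ∧ c w = c v} := by
      rintro w ⟨hw, hcw⟩
      refine ⟨(adj_del' G x y v w).2 ⟨hw, ?_⟩, hcw⟩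
      rintro (⟨rfl, rfl⟩ | ⟨rfl, rfl⟩)
      · exact hne hcw.symm
      · exact hne hcw
    exact le_trans (Set.ncard_le_ncard hss (Set.toFinite _)) (hc.2 v)
  · rcases hc.1 x with h3 | h4
    · have h3y : c y = 3 := heq ▸ h3
      by_cases hsx : 4 ≤ {w | G.Adj x w ∧ c w = 3}.ncard
      · exact key34 G x y hxy hx c hc h3 hsx
      · by_cases hsy : 4 ≤ {w | G.Adj y w ∧ c w = 3}.ncard
        · refine key34 G y x hxy.symm hy c ?_ h3y hsy
          rw [show s(y, x) = s(x, y) from Sym2.eq_swap]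
          exact hc
        · refine ⟨c, hc.1, fun v => ?_⟩
          rcases eq_or_ne x v with rfl | hvx0
          · rw [h3]; omega
          · rcases eq_or_ne y v with rfl | hvy0
            · rw [h3y]; omega
            · exact hbound v hvx0.symm hvy0.symm
    · have h4y : c y = 4 := heq ▸ h4
      refine ⟨c, hc.1, fun v => ?_⟩
      rcases eq_or_ne x v with rfl | hvx0
      · rw [h4]
        have := hdegbound x; rw [h4] at this
        exact le_trans this hx
      · rcases eq_or_ne y v with rfl | hvy0
        · rw [h4y]
          have := hdegbound y; rw [h4y] at this
          exact le_trans this hy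
        · exact hbound v hvx0.symm hvy0.symm
end

section
/- Let G be a finite simple graph and let v be a vertex of G of degree 3 with neighbors v1, v2, v3. Let H be the graph obtained from G − v by adding three new vertices u1, u2, u3 and the six edges v1u1, u1v2, v2u2, u2v3, v3u3, u3v1. If H is (3,4)-colorable, then G is (3,4)-colorable. -/
/-- The graph `H` obtained from `G − v` by adding three new vertices `u₁, u₂, u₃`
and the six edges `v₁u₁, u₁v₂, v₂u₂, u₂v₃, v₃u₃, u₃v₁`. -/
def augGraph {V : Type*} (G : SimpleGraph V) (v v1 v2 v3 : V) :
    SimpleGraph (V ⊕ Fin 3) :=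
  SimpleGraph.fromRel fun a b =>
    match a, b with
    | Sum.inl x, Sum.inl y => G.Adj x y ∧ x ≠ v ∧ y ≠ v
    | Sum.inr i, Sum.inl x =>
        (i = 0 ∧ (x = v1 ∨ x = v2)) ∨ (i = 1 ∧ (x = v2 ∨ x = v3)) ∨
          (i = 2 ∧ (x = v3 ∨ x = v1))
    | _, _ => False

/-- If `v` is a 3-vertex of `G` with neighbors `v₁, v₂, v₃`, and the
graph `H` obtained from `G − v` by adding paths `v₁u₁v₂, v₂u₂v₃, v₃u₃v₁` of length
two is (3,4)-colorable, then `G` is (3,4)-colorable. -/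
theorem stmt_2 {V : Type*} [Fintype V] (G : SimpleGraph V) (v v1 v2 v3 : V)
    (hdeg : degN G v = 3)
    (h1 : G.Adj v v1) (h2 : G.Adj v v2) (h3 : G.Adj v v3)
    (h12 : v1 ≠ v2) (h13 : v1 ≠ v3) (h23 : v2 ≠ v3)
    (hH : Colorable34 (augGraph G v v1 v2 v3)) :
    Colorable34 G := by
  classical
  obtain ⟨c, hval, hcnt⟩ := hH
  have hv1 : v1 ≠ v := fun h => G.loopless.irrefl v (h ▸ h1)
  have hv2 : v2 ≠ v := fun h => G.loopless.irrefl v (h ▸ h2)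
  have hv3 : v3 ≠ v := fun h => G.loopless.irrefl v (h ▸ h3)
  have h3' : ({v1, v2, v3} : Set V).ncard = 3 :=
    Set.ncard_eq_three.mpr ⟨v1, v2, v3, h12, h13, h23, rfl⟩
  have hN : {w | G.Adj v w} = {v1, v2, v3} := by
    symm
    apply Set.eq_of_subset_of_ncard_le
    · rintro w (rfl | rfl | rfl) <;> assumption
    · rw [h3']; exact le_of_eq hdeg
    · exact Set.toFinite _
  set a := if c (Sum.inr 0) = c (Sum.inr 2) then c (Sum.inr 0) else c (Sum.inr 1) with ha
  have haval : a = 3 ∨ a = 4 := by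
    rw [ha]; split <;> exact hval _
  have hadj_u : ∀ (j : Fin 3) (x : V),
      ((j = 0 ∧ (x = v1 ∨ x = v2)) ∨ (j = 1 ∧ (x = v2 ∨ x = v3)) ∨
        (j = 2 ∧ (x = v3 ∨ x = v1))) →
      (augGraph G v v1 v2 v3).Adj (Sum.inl x) (Sum.inr j) := by
    intro j x hr
    rw [augGraph, SimpleGraph.fromRel_adj]
    exact ⟨by simp, Or.inr hr⟩
  have key : ∀ x : V, G.Adj x v →
      ∃ j : Fin 3, (augGraph G v v1 v2 v3).Adj (Sum.inl x) (Sum.inr j) ∧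
        c (Sum.inr j) = a := by
    intro x hx
    have hx3 : x = v1 ∨ x = v2 ∨ x = v3 := by
      have : x ∈ {w | G.Adj v w} := hx.symm
      rw [hN] at this; exact this
    by_cases h02 : c (Sum.inr 0) = c (Sum.inr 2)
    · rcases hx3 with rfl | rfl | rfl
      · exact ⟨0, hadj_u 0 x (Or.inl ⟨rfl, Or.inl rfl⟩), by rw [ha, if_pos h02]⟩
      · exact ⟨0, hadj_u 0 x (Or.inl ⟨rfl, Or.inr rfl⟩), by rw [ha, if_pos h02]⟩
      · exact ⟨2, hadj_u 2 x (Or.inr (Or.inr ⟨rfl, Or.inl rfl⟩)),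
          by rw [ha, if_pos h02, h02]⟩
    · have ha1 : a = c (Sum.inr 1) := by rw [ha, if_neg h02]
      rcases hx3 with rfl | rfl | rfl
      · -- x = v1 : neighbors u0, u2; c u1 equals c u0 or c u2
        have h10 : c (Sum.inr 1) = c (Sum.inr 0) ∨ c (Sum.inr 1) = c (Sum.inr 2) := by
          rcases hval (Sum.inr 0) with e0 | e0 <;> rcases hval (Sum.inr 1) with e1 | e1 <;>
            rcases hval (Sum.inr 2) with e2 | e2 <;> simp [e0, e1, e2] at h02 ⊢
        rcases h10 with h | h
        · exact ⟨0, hadj_u 0 x (Or.inl ⟨rfl, Or.inl rfl⟩), by rw [ha1, h]⟩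
        · exact ⟨2, hadj_u 2 x (Or.inr (Or.inr ⟨rfl, Or.inr rfl⟩)), by rw [ha1, h]⟩
      · exact ⟨1, hadj_u 1 x (Or.inr (Or.inl ⟨rfl, Or.inl rfl⟩)), ha1.symm⟩
      · exact ⟨1, hadj_u 1 x (Or.inr (Or.inl ⟨rfl, Or.inr rfl⟩)), ha1.symm⟩
  -- the coloring of G
  refine ⟨fun x => if x = v then a else c (Sum.inl x), ?_, ?_⟩
  · intro x
    by_cases hx : x = v
    · simpa [hx] using haval
    · simpa [hx] using hval (Sum.inl x)
  · intro x
    by_cases hx : x = v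
    · subst hx
      simp only [if_pos rfl]
      have hsub : {w | G.Adj x w ∧ (if w = x then a else c (Sum.inl w)) = a}
          ⊆ {v1, v2, v3} := by
        intro w hw
        have : w ∈ {w | G.Adj x w} := hw.1
        rw [hN] at this; exact this
      calc {w | G.Adj x w ∧ (if w = x then a else c (Sum.inl w)) = a}.ncard
          ≤ ({v1, v2, v3} : Set V).ncard :=
            Set.ncard_le_ncard hsub (Set.toFinite _)
        _ = 3 := h3'
        _ ≤ a := by rcases haval with h | h <;> omega
    · simp only [if_neg hx]
      have hT := hcnt (Sum.inl x)
      refine le_trans ?_ hT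
      by_cases hxv : G.Adj x v
      · obtain ⟨j, hadjj, hcj⟩ := key x hxv
        apply Set.ncard_le_ncard_of_injOn
          (fun w => if w = v then Sum.inr j else Sum.inl w)
        · rintro w ⟨hGw, hcw⟩
          by_cases hwv : w = v
          · subst hwv
            rw [if_pos rfl] at hcw
            exact ⟨by simpa using hadjj, by simp [hcj, hcw]⟩
          · simp only [if_neg hwv, if_neg hx] at hcw ⊢
            refine ⟨?_, hcw⟩
            rw [augGraph, SimpleGraph.fromRel_adj]
            exact ⟨by simp [hGw.ne], Or.inl ⟨hGw, hx, hwv⟩⟩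
        · intro w1 hw1 w2 hw2 hf
          dsimp only at hf
          by_cases e1 : w1 = v
          · by_cases e2 : w2 = v
            · rw [e1, e2]
            · rw [if_pos e1, if_neg e2] at hf; exact absurd hf (by simp)
          · by_cases e2 : w2 = v
            · rw [if_neg e1, if_pos e2] at hf; exact absurd hf (by simp)
            · rw [if_neg e1, if_neg e2] at hf; exact Sum.inl_injective hf
      · apply Set.ncard_le_ncard_of_injOn Sum.inl
        · rintro w ⟨hGw, hcw⟩
          have hwv : w ≠ v := fun h => hxv (h ▸ hGw)
          simp only [if_neg hwv, if_neg hx] at hcw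
          refine ⟨?_, hcw⟩
          rw [augGraph, SimpleGraph.fromRel_adj]
          exact ⟨by simp [hGw.ne], Or.inl ⟨hGw, hx, hwv⟩⟩
        · exact Sum.inl_injective.injOn
end

section
/- Let G be a finite simple graph that is not (3,4)-colorable, let v be a vertex of G with deg(v) = 2, and let c be a (3,4)-coloring of G − v. Then for each i ∈ {3,4}, v has a neighbor u in G such that u is i-saturated under c, u cannot be recolored, and deg_G(u) ≥ i + 2; moreover, if deg_G(u) ≤ 8, then u has a neighbor w in G − v such that w is j-saturated under c and deg_G(w) ≥ j + 2, where {i, j} = {3, 4}. -/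
set_option linter.unusedSectionVars false

section helpers

variable {V : Type*} [Fintype V] [DecidableEq V]

lemma nle {s t : Set V} (h : s ⊆ t) : s.ncard ≤ t.ncard :=
  Set.ncard_le_ncard h (Set.toFinite t)

lemma max_indep (G : SimpleGraph V) (S : Set V) :
    ∃ S' : Finset V, (↑S' : Set V) ⊆ S ∧ (∀ x ∈ S', ∀ y ∈ S', ¬ G.Adj x y) ∧
      ∀ x ∈ S, x ∉ S' → ∃ y ∈ S', G.Adj x y := by
  classical
  let F : Finset (Finset V) :=
    (S.toFinite.toFinset.powerset).filter (fun t => ∀ x ∈ t, ∀ y ∈ t, ¬ G.Adj x y)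
  have hne : F.Nonempty := ⟨∅, by simp [F]⟩
  obtain ⟨S', hS'F, hmax⟩ := F.exists_maximal hne
  simp only [F, Finset.mem_filter, Finset.mem_powerset] at hS'F
  have hsub : (↑S' : Set V) ⊆ S := by
    intro x hx
    have : x ∈ S.toFinite.toFinset := hS'F.1 hx
    exact (Set.Finite.mem_toFinset _).1 this
  refine ⟨S', hsub, hS'F.2, ?_⟩
  intro x hxS hxS'
  by_contra hno
  push_neg at hno
  have hmem : insert x S' ∈ F := by
    simp only [F, Finset.mem_filter, Finset.mem_powerset]
    constructor
    · intro a ha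
      rcases Finset.mem_insert.1 ha with rfl | ha
      · exact (Set.Finite.mem_toFinset _).2 hxS
      · exact hS'F.1 ha
    · intro a ha b hb
      rcases Finset.mem_insert.1 ha with ha' | ha' <;> rcases Finset.mem_insert.1 hb with hb' | hb'
      · rw [ha', hb']; exact G.loopless.irrefl x
      · rw [ha']; exact hno b hb'
      · rw [hb']; intro h; exact hno a ha' h.symm
      · exact hS'F.2 a ha' b hb'
  exact (Finset.ssubset_insert hxS').2 (hmax hmem (Finset.ssubset_insert hxS').1)

lemma sat_exists (G : SimpleGraph V) (v : V) (hG : ¬ Colorable34 G)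
    (hv : degN G v = 2) (c : V → ℕ) (hc : IsColoring34 (deleteVert G v) c)
    (i : ℕ) (hi : i = 3 ∨ i = 4) :
    ∃ u, G.Adj v u ∧ Saturated34 (deleteVert G v) c i u := by
  by_contra h
  push_neg at h
  apply hG
  refine ⟨Function.update c v i, fun x => ?_, fun x => ?_⟩
  · rcases eq_or_ne x v with rfl | hx
    · rw [Function.update_self]; exact hi
    · rw [Function.update_of_ne hx]; exact hc.1 x
  · rcases eq_or_ne x v with rfl | hx
    · rw [Function.update_self]
      have h1 : {w | G.Adj x w ∧ Function.update c x i w = i}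
          ⊆ {w | G.Adj x w} := fun w hw => hw.1
      have h2 := nle h1
      unfold degN at hv
      omega
    · rw [Function.update_of_ne hx]
      by_cases hax : G.Adj v x ∧ c x = i
      · have hns := h x hax.1
        have hb := hc.2 x
        have hlt : {w | (deleteVert G v).Adj x w ∧ c w = c x}.ncard < i := by
          rcases Nat.lt_or_ge ({w | (deleteVert G v).Adj x w ∧ c w = c x}.ncard) i with h' | h'
          · exact h'
          · exfalso
            apply hns
            refine ⟨hax.2, ?_⟩
            have : {w | (deleteVert G v).Adj x w ∧ c w = i}
                = {w | (deleteVert G v).Adj x w ∧ c w = c x} := by rw [hax.2]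
            rw [this]
            omega
        have hsub : {w | G.Adj x w ∧ Function.update c v i w = c x}
            ⊆ insert v {w | (deleteVert G v).Adj x w ∧ c w = c x} := by
          rintro w ⟨haw, hcw⟩
          rcases eq_or_ne w v with rfl | hwv
          · exact Set.mem_insert _ _
          · rw [Function.update_of_ne hwv] at hcw
            exact Set.mem_insert_of_mem _ ⟨⟨haw, hx, hwv⟩, hcw⟩
        have := nle hsub
        have hins := Set.ncard_insert_le v {w | (deleteVert G v).Adj x w ∧ c w = c x}
        omega
      · refine le_trans (nle ?_) (hc.2 x)
        rintro w ⟨haw, hcw⟩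
        have hwv : w ≠ v := by
          rintro rfl
          rw [Function.update_self] at hcw
          exact hax ⟨haw.symm, hcw.symm⟩
        rw [Function.update_of_ne hwv] at hcw
        exact ⟨⟨haw, hx, hwv⟩, hcw⟩

end helpers

/-- If `G` is not (3,4)-colorable, `deg v = 2`, and `c` is a
(3,4)-coloring of `G − v`, then for each `i ∈ {3,4}`, `v` has an `i`-saturated
neighbor `u` that cannot be recolored, with `deg_G u ≥ i + 2`; moreover if
`deg_G u ≤ 8`, then `u` has a `j`-saturated neighbor `w` in `G − v` with
`deg_G w ≥ j + 2`, where `{i, j} = {3, 4}` (i.e. `j = 7 - i`). -/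
theorem stmt_4 {V : Type*} [Fintype V] [DecidableEq V] (G : SimpleGraph V) (v : V)
    (hG : ¬ Colorable34 G) (hv : degN G v = 2)
    (c : V → ℕ) (hc : IsColoring34 (deleteVert G v) c) :
    ∀ i : ℕ, (i = 3 ∨ i = 4) → ∃ u : V, G.Adj v u ∧
      Saturated34 (deleteVert G v) c i u ∧
      ¬ Recolorable34 (deleteVert G v) c u ∧
      i + 2 ≤ degN G u ∧
      (degN G u ≤ 8 →
        ∃ w : V, (deleteVert G v).Adj u w ∧ Saturated34 (deleteVert G v) c (7 - i) w ∧
          (7 - i) + 2 ≤ degN G w) := by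
  classical
  intro i hi
  have hi3 : 3 ≤ i := by rcases hi with rfl | rfl <;> norm_num
  have hi4 : i ≤ 4 := by rcases hi with rfl | rfl <;> norm_num
  set j := 7 - i with hjdef
  have hj : j = 3 ∨ j = 4 := by omega
  have hij : i ≠ j := by omega
  have hj3 : 3 ≤ j := by omega
  obtain ⟨u, hvu, hsatu⟩ := sat_exists G v hG hv c hc i hi
  obtain ⟨u', hvu', hsatu'⟩ := sat_exists G v hG hv c hc j hj
  obtain ⟨hcu, hIu⟩ := hsatu
  obtain ⟨hcu', hJu'⟩ := hsatu'
  have huu' : u ≠ u' := fun h => hij (by rw [← hcu, h, hcu'])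
  have huv : u ≠ v := hvu.ne'
  have hu'v : u' ≠ v := hvu'.ne'
  have hNv : {w | G.Adj v w} = {u, u'} := by
    refine (Set.eq_of_subset_of_ncard_le ?_ ?_ (Set.toFinite _)).symm
    · intro w hw
      rcases Set.mem_insert_iff.1 hw with rfl | hw
      · exact hvu
      · rw [Set.mem_singleton_iff] at hw; subst hw; exact hvu'
    · rw [Set.ncard_pair huu']
      unfold degN at hv
      omega
  have hadjv : ∀ x, G.Adj v x → x = u ∨ x = u' := by
    intro x hx
    have h2 : x ∈ ({u, u'} : Set V) := by rw [← hNv]; exact hx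
    simpa using h2
  -- Part A : u is not recolorable
  have hNR : ¬ Recolorable34 (deleteVert G v) c u := by
    intro hR
    unfold Recolorable34 at hR
    rw [hcu, ← hjdef] at hR
    apply hG
    refine ⟨Function.update (Function.update c u j) v i, fun x => ?_, fun x => ?_⟩
    · rcases eq_or_ne x v with rfl | hxv
      · rw [Function.update_self]; exact hi
      · rw [Function.update_of_ne hxv]; exact hR.1 x
    · rcases eq_or_ne x v with rfl | hxv
      · rw [Function.update_self]
        have h1 : {w | G.Adj x w ∧
            Function.update (Function.update c u j) x i w = i} ⊆ {w | G.Adj x w} :=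
          fun w hw => hw.1
        have h2 := nle h1
        unfold degN at hv
        omega
      · rw [Function.update_of_ne hxv]
        refine le_trans (nle ?_) (hR.2 x)
        rintro w ⟨haw, hcw⟩
        have hwv : w ≠ v := by
          rintro rfl
          rw [Function.update_self] at hcw
          rcases hadjv x haw.symm with rfl | rfl
          · rw [Function.update_self] at hcw; exact hij hcw
          · rw [Function.update_of_ne huu'.symm, hcu'] at hcw; exact hij hcw
        rw [Function.update_of_ne hwv] at hcw
        exact ⟨⟨haw, hxv, hwv⟩, hcw⟩
  -- Part B : u has a j-colored neighbor in G - v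
  have hjnbr : ∃ w, (deleteVert G v).Adj u w ∧ c w = j := by
    by_contra hB
    push_neg at hB
    apply hNR
    unfold Recolorable34
    rw [hcu, ← hjdef]
    refine ⟨fun x => ?_, fun x => ?_⟩
    · rcases eq_or_ne x u with rfl | hxu
      · rw [Function.update_self]; exact hj
      · rw [Function.update_of_ne hxu]; exact hc.1 x
    · rcases eq_or_ne x u with rfl | hxu
      · rw [Function.update_self]
        have hempty : {w | (deleteVert G v).Adj x w ∧ Function.update c x j w = j} = ∅ := by
          ext w
          simp only [Set.mem_setOf_eq, Set.mem_empty_iff_false, iff_false, not_and]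
          intro haw hcw
          have hwu : w ≠ x := fun h => (deleteVert G v).loopless.irrefl x (h ▸ haw)
          rw [Function.update_of_ne hwu] at hcw
          exact hB w haw hcw
        rw [hempty, Set.ncard_empty]
        omega
      · rw [Function.update_of_ne hxu]
        refine le_trans (nle ?_) (hc.2 x)
        rintro w ⟨haw, hcw⟩
        have hwu : w ≠ u := by
          rintro rfl
          rw [Function.update_self] at hcw
          exact hB x haw.symm hcw.symm
        rw [Function.update_of_ne hwu] at hcw
        exact ⟨haw, hcw⟩
  obtain ⟨w₀, hw₀adj, hw₀c⟩ := hjnbr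
  -- Part C : degree of u is at least i + 2
  have hdegu : i + 2 ≤ degN G u := by
    have hsub : insert v (insert w₀ {w | (deleteVert G v).Adj u w ∧ c w = i})
        ⊆ {w | G.Adj u w} := by
      intro w hw
      rcases Set.mem_insert_iff.1 hw with rfl | hw
      · exact hvu.symm
      · rcases Set.mem_insert_iff.1 hw with rfl | hw
        · exact hw₀adj.1
        · exact hw.1.1
    have h1 : w₀ ∉ {w | (deleteVert G v).Adj u w ∧ c w = i} := by
      intro h; exact hij (h.2.symm.trans hw₀c)
    have h2 : v ∉ insert w₀ {w | (deleteVert G v).Adj u w ∧ c w = i} := by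
      intro h
      rcases Set.mem_insert_iff.1 h with h | h
      · exact hw₀adj.2.2 h.symm
      · exact h.1.2.2 rfl
    have h3 := nle hsub
    rw [Set.ncard_insert_of_notMem h2, Set.ncard_insert_of_notMem h1, hIu] at h3
    unfold degN
    omega
  refine ⟨u, hvu, ⟨hcu, hIu⟩, hNR, hdegu, ?_⟩
  -- Part D : the moreover statement
  intro hd8
  by_contra hNo
  push_neg at hNo
  apply hG
  -- every j-saturated neighbor x of u has all its G-neighbors being u or j-colored
  have hSnx : ∀ x, (deleteVert G v).Adj u x → Saturated34 (deleteVert G v) c j x →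
      {w | G.Adj x w} = insert u {w | (deleteVert G v).Adj x w ∧ c w = j} := by
    intro x hux hsx
    obtain ⟨hcx, hnx⟩ := hsx
    have hdlt : degN G x < j + 2 := hNo x hux ⟨hcx, hnx⟩
    have hsub : insert u {w | (deleteVert G v).Adj x w ∧ c w = j} ⊆ {w | G.Adj x w} := by
      intro w hw
      rcases Set.mem_insert_iff.1 hw with rfl | hw
      · exact hux.1.symm
      · exact hw.1.1
    have hmemu : u ∉ {w | (deleteVert G v).Adj x w ∧ c w = j} := by
      intro h; exact hij (hcu.symm.trans h.2)
    have hnc : (insert u {w | (deleteVert G v).Adj x w ∧ c w = j}).ncard = j + 1 := by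
      rw [Set.ncard_insert_of_notMem hmemu, hnx]
    refine (Set.eq_of_subset_of_ncard_le hsub ?_ (Set.toFinite _)).symm
    unfold degN at hdlt
    omega
  have hSv : ∀ x, (deleteVert G v).Adj u x → Saturated34 (deleteVert G v) c j x →
      ¬ G.Adj x v := by
    intro x hux hsx hadj
    have hmem : v ∈ {w | G.Adj x w} := hadj
    rw [hSnx x hux hsx] at hmem
    rcases Set.mem_insert_iff.1 hmem with h | h
    · exact huv h.symm
    · exact h.1.2.2 rfl
  -- bound on number of j-colored neighbors of u
  have hJu : {w | (deleteVert G v).Adj u w ∧ c w = j}.ncard ≤ j := by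
    have hsub : insert v ({w | (deleteVert G v).Adj u w ∧ c w = i}
        ∪ {w | (deleteVert G v).Adj u w ∧ c w = j}) ⊆ {w | G.Adj u w} := by
      intro w hw
      rcases Set.mem_insert_iff.1 hw with rfl | hw
      · exact hvu.symm
      · rcases hw with hw | hw <;> exact hw.1.1
    have hdisj : Disjoint {w | (deleteVert G v).Adj u w ∧ c w = i}
        {w | (deleteVert G v).Adj u w ∧ c w = j} :=
      Set.disjoint_left.2 fun w hw1 hw2 => hij (hw1.2.symm.trans hw2.2)
    have hvn : v ∉ {w | (deleteVert G v).Adj u w ∧ c w = i}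
        ∪ {w | (deleteVert G v).Adj u w ∧ c w = j} := by
      rintro (h | h) <;> exact h.1.2.2 rfl
    have h3 := nle hsub
    rw [Set.ncard_insert_of_notMem hvn, Set.ncard_union_eq hdisj, hIu] at h3
    unfold degN at hd8
    omega
  -- maximal independent subset of the j-saturated neighbors of u
  set S : Set V := {w | (deleteVert G v).Adj u w ∧ Saturated34 (deleteVert G v) c j w}
    with hSdef
  obtain ⟨S', hS'S, hind, hdom⟩ := max_indep G S
  have hS'mem : ∀ y ∈ S', (deleteVert G v).Adj u y ∧ Saturated34 (deleteVert G v) c j y := by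
    intro y hy
    have : y ∈ S := hS'S hy
    rw [hSdef] at this
    exact this
  -- the new coloring
  set d : V → ℕ := fun w => if w = v then i else if w = u then j else if w ∈ S' then i
    else c w with hddef
  have hdv : d v = i := by rw [hddef]; simp
  have hdu : d u = j := by rw [hddef]; simp [huv]
  have hdS' : ∀ y ∈ S', d y = i := by
    intro y hy
    obtain ⟨huy, _⟩ := hS'mem y hy
    rw [hddef]
    simp only []
    rw [if_neg huy.2.2, if_neg huy.ne', if_pos hy]
  have hdo : ∀ y, y ≠ v → y ≠ u → y ∉ S' → d y = c y := by
    intro y h1 h2 h3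
    rw [hddef]
    simp only []
    rw [if_neg h1, if_neg h2, if_neg h3]
  refine ⟨d, fun x => ?_, fun x => ?_⟩
  · rw [hddef]
    simp only []
    split_ifs
    exacts [hi, hj, hi, hc.1 x]
  · by_cases hxv : x = v
    · subst hxv
      rw [hdv]
      have h1 : {w | G.Adj x w ∧ d w = i} ⊆ {w | G.Adj x w} := fun w hw => hw.1
      have h2 := nle h1
      unfold degN at hv
      omega
    · by_cases hxu : x = u
      · subst hxu
        rw [hdu]
        refine le_trans (nle ?_) hJu
        rintro w ⟨haw, hdw⟩
        have hwv : w ≠ v := by rintro rfl; exact hij (hdv.symm.trans hdw)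
        have hwu : w ≠ x := haw.ne'
        have hwS' : w ∉ S' := fun h => hij ((hdS' w h).symm.trans hdw)
        rw [hdo w hwv hwu hwS'] at hdw
        exact ⟨⟨haw, huv, hwv⟩, hdw⟩
      · by_cases hxS' : x ∈ S'
        · obtain ⟨hux, hsx⟩ := hS'mem x hxS'
          have hT : {w | G.Adj x w ∧ d w = d x} = ∅ := by
            ext w
            simp only [Set.mem_setOf_eq, Set.mem_empty_iff_false, iff_false, not_and]
            intro haw hdw
            rw [hdS' x hxS'] at hdw
            have hwv : w ≠ v := by rintro rfl; exact hSv x hux hsx haw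
            have hwu : w ≠ u := by rintro rfl; rw [hdu] at hdw; exact hij hdw.symm
            by_cases hwS' : w ∈ S'
            · exact hind x hxS' w hwS' haw
            · rw [hdo w hwv hwu hwS'] at hdw
              have hmem : w ∈ insert u {z | (deleteVert G v).Adj x z ∧ c z = j} := by
                rw [← hSnx x hux hsx]; exact haw
              rcases Set.mem_insert_iff.1 hmem with h | h
              · exact hwu h
              · exact hij (hdw.symm.trans h.2)
          rw [hT, Set.ncard_empty]
          omega
        · have hdx : d x = c x := hdo x hxv hxu hxS'
          rw [hdx]
          have hcix : c x = i ∨ c x = j := by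
            have h34 := hc.1 x
            rcases hi with rfl | rfl <;> omega
          rcases hcix with hcx | hcx
          · -- c x = i
            refine le_trans (nle ?_) (hc.2 x)
            rintro w ⟨haw, hdw⟩
            have hwv : w ≠ v := by
              rintro rfl
              rcases hadjv x haw.symm with rfl | rfl
              · exact hxu rfl
              · exact hij (hcx.symm.trans hcu')
            have hwu : w ≠ u := by
              rintro rfl
              rw [hdu] at hdw
              exact hij ((hdw.trans hcx).symm)
            have hwS' : w ∉ S' := by
              intro hw
              obtain ⟨huw, hsw⟩ := hS'mem w hw
              have hmem : x ∈ insert u {z | (deleteVert G v).Adj w z ∧ c z = j} := by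
                rw [← hSnx w huw hsw]; exact haw.symm
              rcases Set.mem_insert_iff.1 hmem with h | h
              · exact hxu h
              · exact hij (hcx.symm.trans h.2)
            rw [hdo w hwv hwu hwS'] at hdw
            exact ⟨⟨haw, hxv, hwv⟩, hdw⟩
          · -- c x = j
            rw [hcx]
            have hcc2 := hc.2 x
            rw [hcx] at hcc2
            by_cases hxadju : G.Adj x u
            · by_cases hxsat : {w | (deleteVert G v).Adj x w ∧ c w = j}.ncard = j
              · -- x is a j-saturated neighbor of u
                have hxS : x ∈ S := by
                  rw [hSdef]
                  exact ⟨⟨hxadju.symm, huv, hxv⟩, hcx, hxsat⟩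
                obtain ⟨y, hyS', hxy⟩ := hdom x hxS hxS'
                obtain ⟨huy, hsy⟩ := hS'mem y hyS'
                have hyJx : y ∈ {w | (deleteVert G v).Adj x w ∧ c w = j} :=
                  ⟨⟨hxy, hxv, huy.2.2⟩, hsy.1⟩
                have hsub : {w | G.Adj x w ∧ d w = j}
                    ⊆ insert u ({w | (deleteVert G v).Adj x w ∧ c w = j} \ {y}) := by
                  rintro w ⟨haw, hdw⟩
                  have hwv : w ≠ v := by rintro rfl; exact hij (hdv.symm.trans hdw)
                  rcases eq_or_ne w u with rfl | hwu
                  · exact Set.mem_insert _ _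
                  · have hwS' : w ∉ S' := fun h => hij ((hdS' w h).symm.trans hdw)
                    rw [hdo w hwv hwu hwS'] at hdw
                    refine Set.mem_insert_of_mem _ ⟨⟨⟨haw, hxv, hwv⟩, hdw⟩, ?_⟩
                    simp only [Set.mem_singleton_iff]
                    rintro rfl
                    exact hwS' hyS'
                have hcard : ({w | (deleteVert G v).Adj x w ∧ c w = j} \ {y}).ncard = j - 1 := by
                  rw [Set.ncard_diff_singleton_of_mem hyJx, hxsat]
                have h3 := nle hsub
                have hins := Set.ncard_insert_le u
                  ({w | (deleteVert G v).Adj x w ∧ c w = j} \ {y})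
                omega
              · -- x is not j-saturated
                have hle : {w | (deleteVert G v).Adj x w ∧ c w = j}.ncard ≤ j - 1 := by
                  omega
                have hsub : {w | G.Adj x w ∧ d w = j}
                    ⊆ insert u {w | (deleteVert G v).Adj x w ∧ c w = j} := by
                  rintro w ⟨haw, hdw⟩
                  have hwv : w ≠ v := by rintro rfl; exact hij (hdv.symm.trans hdw)
                  rcases eq_or_ne w u with rfl | hwu
                  · exact Set.mem_insert _ _
                  · have hwS' : w ∉ S' := fun h => hij ((hdS' w h).symm.trans hdw)
                    rw [hdo w hwv hwu hwS'] at hdw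
                    exact Set.mem_insert_of_mem _ ⟨⟨haw, hxv, hwv⟩, hdw⟩
                have h3 := nle hsub
                have hins := Set.ncard_insert_le u {w | (deleteVert G v).Adj x w ∧ c w = j}
                omega
            · -- u is not adjacent to x
              refine le_trans (nle ?_) hcc2
              rintro w ⟨haw, hdw⟩
              have hwv : w ≠ v := by rintro rfl; exact hij (hdv.symm.trans hdw)
              have hwu : w ≠ u := by rintro rfl; exact hxadju haw
              have hwS' : w ∉ S' := fun h => hij ((hdS' w h).symm.trans hdw)
              rw [hdo w hwv hwu hwS'] at hdw
              exact ⟨⟨haw, hxv, hwv⟩, hdw⟩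
end

section
/- Let G be a minimally non-(3,4)-colorable graph. Then every vertex of degree 2 in G has two distinct neighbors, one of which has degree at least 5 and the other of which has degree at least 6. -/
lemma aux34_s5 {V : Type*} [Fintype V] [DecidableEq V] (G : SimpleGraph V)
    (hnc : ¬ Colorable34 G) (v a b : V) (i j : ℕ)
    (hij : i = 3 ∧ j = 4 ∨ i = 4 ∧ j = 3)
    (hab : a ≠ b) (hva : G.Adj v a) (hvb : G.Adj v b)
    (hnbr : ∀ w, G.Adj v w → w = a ∨ w = b)
    (c : V → ℕ) (hc34 : ∀ w, c w = 3 ∨ c w = 4)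
    (hcnt : ∀ w, {x | (G.deleteEdges {s(v,a)}).Adj w x ∧ c x = c w}.ncard ≤ c w)
    (hcv : c v = i) :
    i + 2 ≤ degN G a ∧ j + 2 ≤ degN G b := by
  have hav : a ≠ v := fun h => G.loopless.irrefl v (h ▸ hva)
  have hbv : b ≠ v := fun h => G.loopless.irrefl v (h ▸ hvb)
  have h3i : 3 ≤ i := by rcases hij with ⟨h1,h2⟩|⟨h1,h2⟩ <;> omega
  have h3j : 3 ≤ j := by rcases hij with ⟨h1,h2⟩|⟨h1,h2⟩ <;> omega
  have hji : j ≠ i := by rcases hij with ⟨h1,h2⟩|⟨h1,h2⟩ <;> omega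
  have hdich : ∀ w, c w = i ∨ c w = j := by
    intro w; rcases hc34 w with h|h <;> rcases hij with ⟨h1,h2⟩|⟨h1,h2⟩ <;> omega
  -- adjacency in G minus edge va
  have hG'a : ∀ x, (G.deleteEdges {s(v,a)}).Adj a x ↔ G.Adj a x ∧ x ≠ v := by
    intro x
    simp only [SimpleGraph.deleteEdges_adj, Set.mem_singleton_iff, Sym2.eq_iff]
    constructor
    · rintro ⟨h1, h2⟩
      refine ⟨h1, fun hx => h2 ?_⟩
      subst hx; tauto
    · rintro ⟨h1, hx⟩
      refine ⟨h1, ?_⟩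
      rintro (⟨rfl, rfl⟩ | ⟨h3, rfl⟩) <;> simp_all
  have hG'o : ∀ w x, w ≠ v → w ≠ a → ((G.deleteEdges {s(v,a)}).Adj w x ↔ G.Adj w x) := by
    intro w x hwv hwa
    simp only [SimpleGraph.deleteEdges_adj, Set.mem_singleton_iff, Sym2.eq_iff]
    constructor
    · exact fun h => h.1
    · intro h
      refine ⟨h, ?_⟩
      rintro (⟨rfl, rfl⟩ | ⟨rfl, rfl⟩) <;> simp_all
  -- bound for the vertex v under any coloring
  have hvbound : ∀ (c' : V → ℕ), 3 ≤ c' v → {x | G.Adj v x ∧ c' x = c' v}.ncard ≤ c' v := by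
    intro c' h3
    have hsub : {x | G.Adj v x ∧ c' x = c' v} ⊆ {a, b} := fun x hx => hnbr x hx.1
    have h1 : {x | G.Adj v x ∧ c' x = c' v}.ncard ≤ ({a, b} : Set V).ncard :=
      Set.ncard_le_ncard hsub (Set.toFinite _)
    have h2 : ({a, b} : Set V).ncard = 2 := Set.ncard_pair hab
    omega
  -- Step 0 : c a = i and a is i-saturated in G - va
  have hstep0 : c a = i ∧ {x | G.Adj a x ∧ x ≠ v ∧ c x = i}.ncard = i := by
    by_contra h0
    refine hnc ⟨c, hc34, fun w => ?_⟩
    by_cases hwv : w = v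
    · rw [hwv]; exact hvbound c (by omega)
    by_cases hwa : w = a
    · rw [hwa]
      by_cases hca : c a = i
      · have hSane : {x | G.Adj a x ∧ x ≠ v ∧ c x = i}.ncard ≠ i := fun h => h0 ⟨hca, h⟩
        have hSale : {x | G.Adj a x ∧ x ≠ v ∧ c x = i}.ncard ≤ i := by
          have hEq : {x | (G.deleteEdges {s(v,a)}).Adj a x ∧ c x = c a}
              = {x | G.Adj a x ∧ x ≠ v ∧ c x = i} := by
            ext x
            simp only [Set.mem_setOf_eq, hG'a, hca]
            tauto
          have := hcnt a
          rw [hEq, hca] at this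
          exact this
        have hTa : {x | G.Adj a x ∧ c x = c a} = insert v {x | G.Adj a x ∧ x ≠ v ∧ c x = i} := by
          ext x
          rcases eq_or_ne x v with rfl | hxv
          · simp only [Set.mem_setOf_eq, Set.mem_insert_iff]
            exact ⟨fun _ => by tauto, fun _ => ⟨hva.symm, by rw [hcv, hca]⟩⟩
          · simp only [Set.mem_setOf_eq, Set.mem_insert_iff, hxv, false_or, hca]
            tauto
        rw [hTa, Set.ncard_insert_of_notMem (fun h => h.2.1 rfl) (Set.toFinite _)]
        omega
      · have hEq : {x | G.Adj a x ∧ c x = c a}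
            = {x | (G.deleteEdges {s(v,a)}).Adj a x ∧ c x = c a} := by
          ext x
          simp only [Set.mem_setOf_eq, hG'a]
          constructor
          · rintro ⟨h1, h2⟩
            refine ⟨⟨h1, fun hx => ?_⟩, h2⟩
            subst hx
            exact hca (by rw [← h2, hcv])
          · rintro ⟨⟨h1, _⟩, h2⟩; exact ⟨h1, h2⟩
        rw [hEq]; exact hcnt a
    · have hEq : {x | G.Adj w x ∧ c x = c w}
          = {x | (G.deleteEdges {s(v,a)}).Adj w x ∧ c x = c w} := by
        ext x; simp only [Set.mem_setOf_eq, hG'o w x hwv hwa]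
      rw [hEq]; exact hcnt w
  obtain ⟨hca, hSa⟩ := hstep0

  have hnadjv : ∀ w, w ≠ a → w ≠ b → ¬ G.Adj w v := by
    intro w h1 h2 h
    rcases hnbr w h.symm with h3 | h3
    exacts [h1 h3, h2 h3]
  -- Step 1 : c b = j and b is j-saturated
  have hstep1 : c b = j ∧ {x | G.Adj b x ∧ c x = j}.ncard = j := by
    by_contra h1
    refine hnc ⟨Function.update c v j, fun w => ?_, fun w => ?_⟩
    · by_cases hwv : w = v
      · rw [hwv, Function.update_self]
        rcases hij with ⟨_, h⟩ | ⟨_, h⟩ <;> omega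
      · rw [Function.update_of_ne hwv]; exact hc34 w
    · by_cases hwv : w = v
      · rw [hwv]
        apply hvbound
        rw [Function.update_self]
        omega
      by_cases hwa : w = a
      · rw [hwa]
        have hEq : {x | G.Adj a x ∧ Function.update c v j x = Function.update c v j a}
            = {x | G.Adj a x ∧ x ≠ v ∧ c x = i} := by
          ext x
          simp only [Set.mem_setOf_eq]
          rw [Function.update_of_ne hav]
          constructor
          · rintro ⟨h1x, h2x⟩
            have hxv : x ≠ v := by
              rintro rfl
              rw [Function.update_self] at h2x
              rw [hca] at h2x
              omega
            rw [Function.update_of_ne hxv] at h2x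
            exact ⟨h1x, hxv, by rw [h2x, hca]⟩
          · rintro ⟨h1x, hxv, h2x⟩
            rw [Function.update_of_ne hxv]
            exact ⟨h1x, by rw [h2x, hca]⟩
        rw [hEq, hSa, Function.update_of_ne hav, hca]
      by_cases hwb : w = b
      · rw [hwb, Function.update_of_ne hbv]
        by_cases hcb : c b = j
        · have hSbne : {x | G.Adj b x ∧ c x = j}.ncard ≠ j := fun h => h1 ⟨hcb, h⟩
          have hSble : {x | G.Adj b x ∧ c x = j}.ncard ≤ j := by
            have hEq : {x | (G.deleteEdges {s(v,a)}).Adj b x ∧ c x = c b}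
                = {x | G.Adj b x ∧ c x = j} := by
              ext x
              simp only [Set.mem_setOf_eq, hG'o b x hbv (Ne.symm hab), hcb]
            have h := hcnt b
            rw [hEq, hcb] at h
            exact h
          have hvSb : v ∉ {x | G.Adj b x ∧ c x = j} := fun hh => by
            have := hh.2; omega
          have hEq2 : {x | G.Adj b x ∧ Function.update c v j x = c b}
              = insert v {x | G.Adj b x ∧ c x = j} := by
            ext x
            simp only [Set.mem_setOf_eq, Set.mem_insert_iff]
            constructor
            · rintro ⟨h1x, h2x⟩
              by_cases hxv : x = v
              · exact Or.inl hxv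
              · rw [Function.update_of_ne hxv, hcb] at h2x
                exact Or.inr ⟨h1x, h2x⟩
            · rintro (rfl | ⟨h1x, h2x⟩)
              · exact ⟨hvb.symm, by rw [Function.update_self, hcb]⟩
              · have hxv : x ≠ v := by rintro rfl; omega
                rw [Function.update_of_ne hxv, hcb]
                exact ⟨h1x, h2x⟩
          rw [hEq2, Set.ncard_insert_of_notMem hvSb (Set.toFinite _), hcb]
          omega
        · have hsub : {x | G.Adj b x ∧ Function.update c v j x = c b}
              ⊆ {x | (G.deleteEdges {s(v,a)}).Adj b x ∧ c x = c b} := by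
            rintro x ⟨h1x, h2x⟩
            have hcbi : c b = i := (hdich b).resolve_right hcb
            have hxv : x ≠ v := by
              rintro rfl
              rw [Function.update_self] at h2x
              omega
            rw [Function.update_of_ne hxv] at h2x
            exact ⟨(hG'o b x hbv (Ne.symm hab)).mpr h1x, h2x⟩
          calc {x | G.Adj b x ∧ Function.update c v j x = c b}.ncard
              ≤ {x | (G.deleteEdges {s(v,a)}).Adj b x ∧ c x = c b}.ncard :=
                Set.ncard_le_ncard hsub (Set.toFinite _)
            _ ≤ c b := hcnt b
      · rw [Function.update_of_ne hwv]
        have hEq : {x | G.Adj w x ∧ Function.update c v j x = c w}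
            = {x | (G.deleteEdges {s(v,a)}).Adj w x ∧ c x = c w} := by
          ext x
          simp only [Set.mem_setOf_eq]
          constructor
          · rintro ⟨h1x, h2x⟩
            have hxv : x ≠ v := by rintro rfl; exact hnadjv w hwa hwb h1x
            rw [Function.update_of_ne hxv] at h2x
            exact ⟨(hG'o w x hwv hwa).mpr h1x, h2x⟩
          · rintro ⟨h1x, h2x⟩
            have h1x' : G.Adj w x := (hG'o w x hwv hwa).mp h1x
            have hxv : x ≠ v := by rintro rfl; exact hnadjv w hwa hwb h1x'
            rw [Function.update_of_ne hxv]
            exact ⟨h1x', h2x⟩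
        rw [hEq]
        exact hcnt w
  obtain ⟨hcb, hSb⟩ := hstep1
  -- Step 2 : a has a neighbor colored j
  have hstep2 : ∃ w0, G.Adj a w0 ∧ c w0 = j := by
    by_contra h2
    push_neg at h2
    have hAi : ∀ x, G.Adj a x → c x = i := fun x hx => (hdich x).resolve_right (h2 x hx)
    refine hnc ⟨Function.update c a j, fun w => ?_, fun w => ?_⟩
    · by_cases hwa : w = a
      · rw [hwa, Function.update_self]
        rcases hij with ⟨_, h⟩ | ⟨_, h⟩ <;> omega
      · rw [Function.update_of_ne hwa]; exact hc34 w
    · by_cases hwv : w = v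
      · rw [hwv]
        apply hvbound
        rw [Function.update_of_ne (Ne.symm hav)]
        omega
      by_cases hwa : w = a
      · rw [hwa]
        have hEq : {x | G.Adj a x ∧ Function.update c a j x = Function.update c a j a} = ∅ := by
          ext x
          simp only [Set.mem_setOf_eq, Set.mem_empty_iff_false, iff_false, not_and]
          intro h1x
          have hxa : x ≠ a := fun h => G.loopless.irrefl a (h ▸ h1x)
          rw [Function.update_self, Function.update_of_ne hxa]
          have := hAi x h1x
          omega
        rw [hEq, Set.ncard_empty]
        exact Nat.zero_le _
      · rw [Function.update_of_ne hwa]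
        have hsub : {x | G.Adj w x ∧ Function.update c a j x = c w}
            ⊆ {x | (G.deleteEdges {s(v,a)}).Adj w x ∧ c x = c w} := by
          rintro x ⟨h1x, h2x⟩
          have hxa : x ≠ a := by
            rintro rfl
            rw [Function.update_self] at h2x
            have := hAi w h1x.symm
            omega
          rw [Function.update_of_ne hxa] at h2x
          exact ⟨(hG'o w x hwv hwa).mpr h1x, h2x⟩
        calc {x | G.Adj w x ∧ Function.update c a j x = c w}.ncard
            ≤ {x | (G.deleteEdges {s(v,a)}).Adj w x ∧ c x = c w}.ncard :=
              Set.ncard_le_ncard hsub (Set.toFinite _)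
          _ ≤ c w := hcnt w
  -- Step 3 : b has a neighbor other than v colored i
  have hstep3 : ∃ w1, G.Adj b w1 ∧ w1 ≠ v ∧ c w1 = i := by
    by_contra h3
    push_neg at h3
    have hBj : ∀ x, G.Adj b x → x ≠ v → c x = j := fun x hx hxv =>
      (hdich x).resolve_left (h3 x hx hxv)
    have hnab : ¬ G.Adj a b := by
      intro h
      have := hBj a h.symm hav
      omega
    set c3 := Function.update (Function.update c v j) b i with hc3def
    have hc3v : c3 v = j := by
      rw [hc3def, Function.update_of_ne (Ne.symm hbv), Function.update_self]
    have hc3b : c3 b = i := by rw [hc3def, Function.update_self]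
    have hc3o : ∀ x, x ≠ v → x ≠ b → c3 x = c x := fun x h1 h2 => by
      rw [hc3def, Function.update_of_ne h2, Function.update_of_ne h1]
    refine hnc ⟨c3, fun w => ?_, fun w => ?_⟩
    · by_cases h1 : w = v
      · rw [h1, hc3v]; rcases hij with ⟨_, h⟩ | ⟨_, h⟩ <;> omega
      by_cases h2 : w = b
      · rw [h2, hc3b]; rcases hij with ⟨h, _⟩ | ⟨h, _⟩ <;> omega
      · rw [hc3o w h1 h2]; exact hc34 w
    · by_cases hwv : w = v
      · rw [hwv]
        apply hvbound
        rw [hc3v]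
        omega
      by_cases hwb : w = b
      · rw [hwb]
        have hEq : {x | G.Adj b x ∧ c3 x = c3 b} = ∅ := by
          ext x
          simp only [Set.mem_setOf_eq, Set.mem_empty_iff_false, iff_false, not_and]
          intro h1x
          have hxb : x ≠ b := fun h => G.loopless.irrefl b (h ▸ h1x)
          rw [hc3b]
          by_cases hxv : x = v
          · rw [hxv, hc3v]; omega
          · rw [hc3o x hxv hxb]
            have := hBj x h1x hxv
            omega
        rw [hEq, Set.ncard_empty]
        exact Nat.zero_le _
      by_cases hwa : w = a
      · rw [hwa]
        have hc3a : c3 a = c a := hc3o a hav hab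
        have hEq : {x | G.Adj a x ∧ c3 x = c3 a} = {x | G.Adj a x ∧ x ≠ v ∧ c x = i} := by
          ext x
          simp only [Set.mem_setOf_eq]
          constructor
          · rintro ⟨h1x, h2x⟩
            have hxv : x ≠ v := by
              rintro rfl
              rw [hc3v, hc3a, hca] at h2x
              omega
            have hxb : x ≠ b := by rintro rfl; exact hnab h1x
            rw [hc3o x hxv hxb, hc3a, hca] at h2x
            exact ⟨h1x, hxv, h2x⟩
          · rintro ⟨h1x, hxv, h2x⟩
            have hxb : x ≠ b := by rintro rfl; exact hnab h1x
            rw [hc3o x hxv hxb, hc3a, hca]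
            exact ⟨h1x, h2x⟩
        rw [hEq, hSa, hc3a, hca]
      · have hc3w : c3 w = c w := hc3o w hwv hwb
        rw [hc3w]
        have hsub : {x | G.Adj w x ∧ c3 x = c w}
            ⊆ {x | (G.deleteEdges {s(v,a)}).Adj w x ∧ c x = c w} := by
          rintro x ⟨h1x, h2x⟩
          have hxv : x ≠ v := by rintro rfl; exact hnadjv w hwa hwb h1x
          have hxb : x ≠ b := by
            rintro rfl
            have := hBj w h1x.symm hwv
            rw [hc3b] at h2x
            omega
          rw [hc3o x hxv hxb] at h2x
          exact ⟨(hG'o w x hwv hwa).mpr h1x, h2x⟩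
        calc {x | G.Adj w x ∧ c3 x = c w}.ncard
            ≤ {x | (G.deleteEdges {s(v,a)}).Adj w x ∧ c x = c w}.ncard :=
              Set.ncard_le_ncard hsub (Set.toFinite _)
          _ ≤ c w := hcnt w
  obtain ⟨w0, hw0a, hw0j⟩ := hstep2
  obtain ⟨w1, hw1b, hw1v, hw1i⟩ := hstep3
  constructor
  · -- i + 2 ≤ degN G a
    have hw0v : w0 ≠ v := by rintro rfl; omega
    have hw0S : w0 ∉ {x | G.Adj a x ∧ x ≠ v ∧ c x = i} := fun h => by
      have := h.2.2; omega
    have hvS : v ∉ insert w0 {x | G.Adj a x ∧ x ≠ v ∧ c x = i} := by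
      simp only [Set.mem_insert_iff, Set.mem_setOf_eq]
      push_neg
      exact ⟨Ne.symm hw0v, fun _ h => absurd rfl h⟩
    have hsub : insert v (insert w0 {x | G.Adj a x ∧ x ≠ v ∧ c x = i}) ⊆ {x | G.Adj a x} := by
      intro x hx
      simp only [Set.mem_insert_iff, Set.mem_setOf_eq] at hx
      rcases hx with rfl | rfl | hx
      · exact hva.symm
      · exact hw0a
      · exact hx.1
    have hcard : (insert v (insert w0 {x | G.Adj a x ∧ x ≠ v ∧ c x = i})).ncard = i + 2 := by
      rw [Set.ncard_insert_of_notMem hvS (Set.toFinite _),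
        Set.ncard_insert_of_notMem hw0S (Set.toFinite _), hSa]
    have hle := Set.ncard_le_ncard hsub (Set.toFinite _)
    have hdeg : degN G a = {x | G.Adj a x}.ncard := rfl
    omega
  · -- j + 2 ≤ degN G b
    have hw1S : w1 ∉ {x | G.Adj b x ∧ c x = j} := fun h => by
      have := h.2; omega
    have hvS : v ∉ insert w1 {x | G.Adj b x ∧ c x = j} := by
      simp only [Set.mem_insert_iff, Set.mem_setOf_eq]
      push_neg
      refine ⟨Ne.symm hw1v, fun _ => ?_⟩
      omega
    have hsub : insert v (insert w1 {x | G.Adj b x ∧ c x = j}) ⊆ {x | G.Adj b x} := by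
      intro x hx
      simp only [Set.mem_insert_iff, Set.mem_setOf_eq] at hx
      rcases hx with rfl | rfl | hx
      · exact hvb.symm
      · exact hw1b
      · exact hx.1
    have hcard : (insert v (insert w1 {x | G.Adj b x ∧ c x = j})).ncard = j + 2 := by
      rw [Set.ncard_insert_of_notMem hvS (Set.toFinite _),
        Set.ncard_insert_of_notMem hw1S (Set.toFinite _), hSb]
    have hle := Set.ncard_le_ncard hsub (Set.toFinite _)
    have hdeg : degN G b = {x | G.Adj b x}.ncard := rfl
    omega

/-- In a minimally non-(3,4)-colorable graph, every 2-vertex has two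
distinct neighbors, one of degree at least 5 and the other of degree at least 6. -/
theorem stmt_5 {V : Type*} [Fintype V] (G : SimpleGraph V)
    (hG : MinNonColorable34 G) (v : V) (hv : degN G v = 2) :
    ∃ a b : V, a ≠ b ∧ G.Adj v a ∧ G.Adj v b ∧ 5 ≤ degN G a ∧ 6 ≤ degN G b := by
  classical
  obtain ⟨hnc, -, hdelE⟩ := hG
  have hv' : {w | G.Adj v w}.ncard = 2 := hv
  obtain ⟨a, b, hab, hNab⟩ := Set.ncard_eq_two.mp hv'
  have hva : G.Adj v a := by
    have h : a ∈ {w | G.Adj v w} := by rw [hNab]; exact Set.mem_insert _ _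
    exact h
  have hvb : G.Adj v b := by
    have h : b ∈ {w | G.Adj v w} := by
      rw [hNab]; exact Set.mem_insert_of_mem _ rfl
    exact h
  have hnbr : ∀ w, G.Adj v w → w = a ∨ w = b := by
    intro w hw
    have h : w ∈ ({a, b} : Set V) := hNab ▸ hw
    simpa using h
  obtain ⟨c, hc34, hcnt⟩ := hdelE s(v, a) (G.mem_edgeSet.mpr hva)
  have hij : c v = 3 ∧ 7 - c v = 4 ∨ c v = 4 ∧ 7 - c v = 3 := by
    rcases hc34 v with h | h <;> omega
  obtain ⟨hda, hdb⟩ :=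
    aux34_s5 G hnc v a b (c v) (7 - c v) hij hab hva hvb hnbr c hc34 hcnt rfl
  rcases hc34 v with h | h
  · exact ⟨a, b, hab, hva, hvb, by omega, by omega⟩
  · exact ⟨b, a, Ne.symm hab, hvb, hva, by omega, by omega⟩
end

section
/- Let G be a finite simple graph that is not (3,4)-colorable, let v be a vertex of G with deg(v) ∈ {4, 5}, and let c be a (3,4)-coloring of G − v. Then v has a neighbor u in G such that u is 4-saturated under c and u is either a vertex of degree at least 9, or a vertex of degree at least 6 with at least two 3^+-neighbors. -/
section Aux

variable {V : Type*} [Fintype V] [DecidableEq V]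

/-- Splitting the neighbourhood by colour. -/
lemma split_count (G' : SimpleGraph V) (c : V → ℕ)
    (hcol : ∀ w, c w = 3 ∨ c w = 4) (u : V) :
    {w | G'.Adj u w}.ncard
      = {w | G'.Adj u w ∧ c w = 3}.ncard + {w | G'.Adj u w ∧ c w = 4}.ncard := by
  rw [← Set.ncard_union_eq ?_ (Set.toFinite _) (Set.toFinite _)]
  · congr 1
    ext w
    simp only [Set.mem_union, Set.mem_setOf_eq]
    constructor
    · intro h
      rcases hcol w with h3 | h4
      · exact Or.inl ⟨h, h3⟩
      · exact Or.inr ⟨h, h4⟩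
    · rintro (⟨h, _⟩ | ⟨h, _⟩) <;> exact h
  · rw [Set.disjoint_left]
    rintro w ⟨_, h3⟩ ⟨_, h4⟩
    omega

lemma deg_ge (G : SimpleGraph V) (v u : V) (hadj : G.Adj v u) :
    {w | (deleteVert G v).Adj u w}.ncard + 1 ≤ degN G u := by
  have hvnot : v ∉ {w | (deleteVert G v).Adj u w} := by
    intro h
    exact h.2.2 rfl
  have hsub : insert v {w | (deleteVert G v).Adj u w} ⊆ {w | G.Adj u w} := by
    intro w hw
    rcases Set.mem_insert_iff.mp hw with rfl | hw
    · exact hadj.symm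
    · exact hw.1
  have h := Set.ncard_le_ncard hsub (Set.toFinite _)
  rwa [Set.ncard_insert_of_notMem hvnot (Set.toFinite _)] at h

lemma small_nbr (G : SimpleGraph V) (v u x : V) (hu : G.Adj v u) (hx : G.Adj u x)
    (hxv : x ≠ v) (hvdeg : 3 ≤ degN G v) (htpn : tpn G u ≤ 1) : degN G x ≤ 2 := by
  by_contra h
  push_neg at h
  have hsub : ({x, v} : Set V) ⊆ {w | G.Adj u w ∧ 3 ≤ degN G w} := by
    intro w hw
    rcases hw with rfl | hw
    · exact ⟨hx, h⟩
    · rcases hw with rfl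
      exact ⟨hu.symm, hvdeg⟩
  have h2 := Set.ncard_le_ncard hsub (Set.toFinite _)
  rw [Set.ncard_pair hxv] at h2
  unfold tpn at htpn
  omega

/-- 4-saturated vertices remain 4-saturated when tracing back a 4→3 recolouring. -/
lemma sat_transfer (G' : SimpleGraph V) (c : V → ℕ) (hc : IsColoring34 G' c)
    (u0 u : V) (hsat : Saturated34 G' (Function.update c u0 3) 4 u) :
    Saturated34 G' c 4 u := by
  obtain ⟨hcu, hcount⟩ := hsat
  have hne : u ≠ u0 := by
    intro h
    rw [h, Function.update_self] at hcu
    omega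
  have hcu' : c u = 4 := by rwa [Function.update_of_ne hne] at hcu
  have hsub : {w | G'.Adj u w ∧ Function.update c u0 3 w = 4}
      ⊆ {w | G'.Adj u w ∧ c w = 4} := by
    rintro w ⟨hw, hw4⟩
    refine ⟨hw, ?_⟩
    by_cases hwu : w = u0
    · rw [hwu, Function.update_self] at hw4; omega
    · rwa [Function.update_of_ne hwu] at hw4
  have h1 := Set.ncard_le_ncard hsub (Set.toFinite _)
  have h2 := hc.2 u
  rw [hcu'] at h2
  rw [hcount] at h1
  exact ⟨hcu', le_antisymm h2 h1⟩

/-- Recolouring a vertex with few 3-coloured neighbours (all of low degree) to 3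
keeps the colouring valid. -/
lemma recolor (G : SimpleGraph V) (v : V) (c : V → ℕ)
    (hc : IsColoring34 (deleteVert G v) c) (u0 : V)
    (hA3 : {w | (deleteVert G v).Adj u0 w ∧ c w = 3}.ncard ≤ 3)
    (hsmall : ∀ x, (deleteVert G v).Adj u0 x → c x = 3 → degN G x ≤ 2) :
    IsColoring34 (deleteVert G v) (Function.update c u0 3) := by
  set G' := deleteVert G v with hG'
  set c' := Function.update c u0 3 with hc'
  constructor
  · intro w
    by_cases hw : w = u0
    · left; rw [hc', hw, Function.update_self]
    · rw [hc', Function.update_of_ne hw]; exact hc.1 w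
  · intro x
    by_cases hx : x = u0
    · subst hx
      have hcx : c' x = 3 := by rw [hc', Function.update_self]
      rw [hcx]
      have hset : {w | G'.Adj x w ∧ c' w = 3} = {w | G'.Adj x w ∧ c w = 3} := by
        ext w
        simp only [Set.mem_setOf_eq]
        constructor
        · rintro ⟨hw, hw3⟩
          exact ⟨hw, by rwa [hc', Function.update_of_ne hw.ne'] at hw3⟩
        · rintro ⟨hw, hw3⟩
          exact ⟨hw, by rwa [hc', Function.update_of_ne hw.ne']⟩
      rw [hset]
      exact hA3
    · have hcx : c' x = c x := by rw [hc', Function.update_of_ne hx]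
      rw [hcx]
      rcases hc.1 x with h3 | h4
      · rw [h3]
        by_cases hadjx : G'.Adj u0 x
        · -- x is a low-degree vertex: bound by its full degree
          have hdx : degN G x ≤ 2 := hsmall x hadjx h3
          have hsub : {w | G'.Adj x w ∧ c' w = 3} ⊆ {w | G.Adj x w} := by
            rintro w ⟨hw, _⟩
            exact hw.1
          have := Set.ncard_le_ncard hsub (Set.toFinite _)
          unfold degN at hdx
          omega
        · have hset : {w | G'.Adj x w ∧ c' w = 3} = {w | G'.Adj x w ∧ c w = 3} := by
            ext w
            simp only [Set.mem_setOf_eq]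
            have hwne : G'.Adj x w → w ≠ u0 := by
              intro hw hweq
              exact hadjx (hweq ▸ hw).symm
            constructor
            · rintro ⟨hw, hw3⟩
              exact ⟨hw, by rwa [hc', Function.update_of_ne (hwne hw)] at hw3⟩
            · rintro ⟨hw, hw3⟩
              exact ⟨hw, by rwa [hc', Function.update_of_ne (hwne hw)]⟩
          rw [hset]
          have h2 := hc.2 x
          rw [h3] at h2
          exact h2
      · rw [h4]
        have hsub : {w | G'.Adj x w ∧ c' w = 4} ⊆ {w | G'.Adj x w ∧ c w = 4} := by
          rintro w ⟨hw, hw4⟩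
          refine ⟨hw, ?_⟩
          by_cases hwu : w = u0
          · rw [hwu] at hw4
            rw [hc', Function.update_self] at hw4
            omega
          · rwa [hc', Function.update_of_ne hwu] at hw4
        have h1 := Set.ncard_le_ncard hsub (Set.toFinite _)
        have h2 := hc.2 x
        rw [h4] at h2
        omega

end Aux

section Aux2
variable {V : Type*} [Fintype V] [DecidableEq V]

set_option linter.unusedSectionVars false

/-- If no neighbour of `v` is 4-saturated, the colouring extends to `G`. -/
lemma extend34 (G : SimpleGraph V) (v : V) (c : V → ℕ)
    (hc : IsColoring34 (deleteVert G v) c) (hdv : degN G v ≤ 5)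
    (hnosat : ∀ u, G.Adj v u → ¬ Saturated34 (deleteVert G v) c 4 u) :
    Colorable34 G := by
  set G' := deleteVert G v with hG'
  have hGadj : ∀ x w : V, x ≠ v → w ≠ v → G.Adj x w → G'.Adj x w :=
    fun x w hx hw h => ⟨h, hx, hw⟩
  by_cases h4 : {w | G.Adj v w ∧ c w = 4}.ncard ≤ 4
  · refine ⟨Function.update c v 4, ?_, ?_⟩
    · intro w
      by_cases hw : w = v
      · right; rw [hw, Function.update_self]
      · rw [Function.update_of_ne hw]; exact hc.1 w
    · intro x
      by_cases hx : x = v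
      · subst hx
        rw [Function.update_self]
        have hset : {w | G.Adj x w ∧ Function.update c x 4 w = 4}
            = {w | G.Adj x w ∧ c w = 4} := by
          ext w
          simp only [Set.mem_setOf_eq]
          constructor
          · rintro ⟨hw, hw4⟩
            exact ⟨hw, by rwa [Function.update_of_ne hw.ne'] at hw4⟩
          · rintro ⟨hw, hw4⟩
            exact ⟨hw, by rwa [Function.update_of_ne hw.ne']⟩
        rw [hset]
        exact h4
      · rw [Function.update_of_ne hx]
        rcases hc.1 x with h3 | hx4
        · rw [h3]
          have hset : {w | G.Adj x w ∧ Function.update c v 4 w = 3}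
              = {w | G'.Adj x w ∧ c w = 3} := by
            ext w
            simp only [Set.mem_setOf_eq]
            constructor
            · rintro ⟨hw, hw3⟩
              have hwv : w ≠ v := by
                intro h; rw [h, Function.update_self] at hw3; omega
              rw [Function.update_of_ne hwv] at hw3
              exact ⟨hGadj x w hx hwv hw, hw3⟩
            · rintro ⟨hw, hw3⟩
              exact ⟨hw.1, by rwa [Function.update_of_ne hw.2.2]⟩
          rw [hset]
          have h2 := hc.2 x
          rwa [h3] at h2
        · rw [hx4]
          by_cases hadjx : G.Adj x v
          · have hnot4 : {w | G'.Adj x w ∧ c w = 4}.ncard ≤ 3 := by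
              have hns := hnosat x hadjx.symm
              have h2 := hc.2 x
              rw [hx4] at h2
              have hne4 : {w | G'.Adj x w ∧ c w = 4}.ncard ≠ 4 := by
                intro h
                exact hns ⟨hx4, h⟩
              omega
            have hsub : {w | G.Adj x w ∧ Function.update c v 4 w = 4}
                ⊆ insert v {w | G'.Adj x w ∧ c w = 4} := by
              rintro w ⟨hw, hw4⟩
              by_cases hwv : w = v
              · exact hwv ▸ Set.mem_insert _ _
              · rw [Function.update_of_ne hwv] at hw4
                exact Set.mem_insert_of_mem _ ⟨hGadj x w hx hwv hw, hw4⟩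
            have h1 := Set.ncard_le_ncard hsub (Set.toFinite _)
            have h2 := Set.ncard_insert_le v {w | G'.Adj x w ∧ c w = 4}
            omega
          · have hset : {w | G.Adj x w ∧ Function.update c v 4 w = 4}
                = {w | G'.Adj x w ∧ c w = 4} := by
              ext w
              simp only [Set.mem_setOf_eq]
              constructor
              · rintro ⟨hw, hw4⟩
                have hwv : w ≠ v := by
                  intro h; rw [h] at hw; exact hadjx hw
                rw [Function.update_of_ne hwv] at hw4
                exact ⟨hGadj x w hx hwv hw, hw4⟩
              · rintro ⟨hw, hw4⟩
                exact ⟨hw.1, by rwa [Function.update_of_ne hw.2.2]⟩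
            rw [hset]
            have h2 := hc.2 x
            rwa [hx4] at h2
  · -- all neighbours of v are coloured 4; colour v with 3
    push_neg at h4
    have hall : ∀ w, G.Adj v w → c w = 4 := by
      have hsub : {w | G.Adj v w ∧ c w = 4} ⊆ {w | G.Adj v w} := fun w hw => hw.1
      have heq := Set.eq_of_subset_of_ncard_le hsub (by unfold degN at hdv; omega)
        (Set.toFinite _)
      intro w hw
      have : w ∈ {w | G.Adj v w ∧ c w = 4} := heq ▸ hw
      exact this.2
    refine ⟨Function.update c v 3, ?_, ?_⟩
    · intro w
      by_cases hw : w = v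
      · left; rw [hw, Function.update_self]
      · rw [Function.update_of_ne hw]; exact hc.1 w
    · intro x
      by_cases hx : x = v
      · subst hx
        rw [Function.update_self]
        have hset : {w | G.Adj x w ∧ Function.update c x 3 w = 3} = ∅ := by
          ext w
          simp only [Set.mem_setOf_eq, Set.mem_empty_iff_false, iff_false]
          rintro ⟨hw, hw3⟩
          rw [Function.update_of_ne hw.ne'] at hw3
          have := hall w hw
          omega
        rw [hset, Set.ncard_empty]
        omega
      · rw [Function.update_of_ne hx]
        rcases hc.1 x with h3 | hx4
        · rw [h3]
          have hset : {w | G.Adj x w ∧ Function.update c v 3 w = 3}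
              = {w | G'.Adj x w ∧ c w = 3} := by
            ext w
            simp only [Set.mem_setOf_eq]
            constructor
            · rintro ⟨hw, hw3⟩
              have hwv : w ≠ v := by
                intro h
                rw [h] at hw
                have := hall x hw.symm
                omega
              rw [Function.update_of_ne hwv] at hw3
              exact ⟨hGadj x w hx hwv hw, hw3⟩
            · rintro ⟨hw, hw3⟩
              exact ⟨hw.1, by rwa [Function.update_of_ne hw.2.2]⟩
          rw [hset]
          have h2 := hc.2 x
          rwa [h3] at h2
        · rw [hx4]
          have hset : {w | G.Adj x w ∧ Function.update c v 3 w = 4}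
              = {w | G'.Adj x w ∧ c w = 4} := by
            ext w
            simp only [Set.mem_setOf_eq]
            constructor
            · rintro ⟨hw, hw4⟩
              have hwv : w ≠ v := by
                intro h; rw [h, Function.update_self] at hw4; omega
              rw [Function.update_of_ne hwv] at hw4
              exact ⟨hGadj x w hx hwv hw, hw4⟩
            · rintro ⟨hw, hw4⟩
              exact ⟨hw.1, by rwa [Function.update_of_ne hw.2.2]⟩
          rw [hset]
          have h2 := hc.2 x
          rwa [hx4] at h2

lemma main_ind (G : SimpleGraph V) (v : V) (hdv : degN G v = 4 ∨ degN G v = 5) :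
    ∀ n (c : V → ℕ), IsColoring34 (deleteVert G v) c →
      {w | c w = 4}.ncard ≤ n →
      (∀ u, G.Adj v u → Saturated34 (deleteVert G v) c 4 u →
        degN G u ≤ 8 ∧ (degN G u ≤ 5 ∨ tpn G u ≤ 1)) →
      Colorable34 G := by
  have hdv5 : degN G v ≤ 5 := by rcases hdv with h | h <;> omega
  intro n
  induction n with
  | zero =>
      intro c hc hcard hinv
      apply extend34 G v c hc hdv5
      intro u hadj hsat
      have hmem : u ∈ {w | c w = 4} := hsat.1
      have h0 : {w | c w = 4} = ∅ := by
        rw [← Set.ncard_eq_zero (Set.toFinite _)]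
        omega
      rw [h0] at hmem
      exact hmem
  | succ n ih =>
      intro c hc hcard hinv
      by_cases hex : ∃ u, G.Adj v u ∧ Saturated34 (deleteVert G v) c 4 u
      · obtain ⟨u0, hadj0, hsat0⟩ := hex
        obtain ⟨h8, hcase⟩ := hinv u0 hadj0 hsat0
        have hsplit := split_count (deleteVert G v) c hc.1 u0
        have hge := deg_ge G v u0 hadj0
        have hA4 := hsat0.2
        have hA3 : {w | (deleteVert G v).Adj u0 w ∧ c w = 3}.ncard ≤ 3 := by omega
        have hsmall : ∀ x, (deleteVert G v).Adj u0 x → c x = 3 → degN G x ≤ 2 := by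
          intro x hadjx h3x
          rcases hcase with h5 | h1
          · exfalso
            have hxmem : x ∈ {w | (deleteVert G v).Adj u0 w ∧ c w = 3} := ⟨hadjx, h3x⟩
            have hzero : {w | (deleteVert G v).Adj u0 w ∧ c w = 3} = ∅ := by
              rw [← Set.ncard_eq_zero (Set.toFinite _)]
              omega
            rw [hzero] at hxmem
            exact hxmem
          · exact small_nbr G v u0 x hadj0 hadjx.1 hadjx.2.2
              (by rcases hdv with h | h <;> omega) h1
        have hc' := recolor G v c hc u0 hA3 hsmall
        apply ih (Function.update c u0 3) hc' ?_ ?_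
        · have hsub : {w | Function.update c u0 3 w = 4} ⊆ {w | c w = 4} \ {u0} := by
            intro w hw
            simp only [Set.mem_setOf_eq] at hw
            by_cases hwu : w = u0
            · rw [hwu, Function.update_self] at hw; omega
            · rw [Function.update_of_ne hwu] at hw
              exact ⟨hw, hwu⟩
          have h1 := Set.ncard_le_ncard hsub (Set.toFinite _)
          have hu0mem : u0 ∈ {w | c w = 4} := hsat0.1
          have h2 := Set.ncard_diff_singleton_of_mem hu0mem
          have h3 : 1 ≤ {w | c w = 4}.ncard := by
            rw [Nat.one_le_iff_ne_zero]
            intro h0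
            rw [Set.ncard_eq_zero (Set.toFinite _)] at h0
            rw [h0] at hu0mem
            exact hu0mem
          omega
        · intro u hadju hsatu
          exact hinv u hadju (sat_transfer (deleteVert G v) c hc u0 u hsatu)
      · push_neg at hex
        exact extend34 G v c hc hdv5 hex

end Aux2

/-- If `G` is not (3,4)-colorable, `deg v ∈ {4, 5}`, and `c` is a
(3,4)-coloring of `G − v`, then `v` has a 4-saturated neighbor that is either a
`9⁺`-vertex or a `6⁺`-vertex with at least two 3^+-neighbors. -/
theorem stmt_6 {V : Type*} [Fintype V] (G : SimpleGraph V) (v : V)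
    (hG : ¬ Colorable34 G) (hv : degN G v = 4 ∨ degN G v = 5)
    (c : V → ℕ) (hc : IsColoring34 (deleteVert G v) c) :
    ∃ u : V, G.Adj v u ∧ Saturated34 (deleteVert G v) c 4 u ∧
      (9 ≤ degN G u ∨ (6 ≤ degN G u ∧ 2 ≤ tpn G u)) := by
  classical
  by_contra hcon
  push_neg at hcon
  apply hG
  apply main_ind G v hv ({w | c w = 4}.ncard) c hc le_rfl
  intro u hadj hsat
  obtain ⟨ha, hb⟩ := hcon u hadj hsat
  refine ⟨by omega, ?_⟩
  by_cases h6 : 6 ≤ degN G u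
  · right
    have := hb h6
    omega
  · left
    omega
end

section
/- Let G be a minimally non-(3,4)-colorable graph. Then every vertex of degree 4 or 5 in G has a neighbor that is either a vertex of degree at least 9, or a vertex of degree at least 6 with at least two 3^+-neighbors. -/
/-- In a minimally non-(3,4)-colorable graph, every vertex of degree
4 or 5 has a neighbor that is either a `9⁺`-vertex or a `6⁺`-vertex with at least
two 3^+-neighbors. -/
theorem stmt_8 {V : Type*} [Fintype V] (G : SimpleGraph V)
    (hG : MinNonColorable34 G) (v : V) (hv : degN G v = 4 ∨ degN G v = 5) :
    ∃ u : V, G.Adj v u ∧ (9 ≤ degN G u ∨ (6 ≤ degN G u ∧ 2 ≤ tpn G u)) := by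
  classical
  by_contra hcon
  push_neg at hcon
  obtain ⟨hnc, hdel, -⟩ := hG
  -- a coloring of G - v minimizing the number of vertices colored 4
  obtain ⟨c, hc, hcmin⟩ : ∃ c, IsColoring34 (deleteVert G v) c ∧
      ∀ c', IsColoring34 (deleteVert G v) c' →
        {x | c x = 4}.ncard ≤ {x | c' x = 4}.ncard := by
    have hex : ∃ n : ℕ, ∃ c : V → ℕ,
        IsColoring34 (deleteVert G v) c ∧ {x | c x = 4}.ncard = n := by
      obtain ⟨c, hc⟩ := hdel v
      exact ⟨_, c, hc, rfl⟩
    obtain ⟨c, hc, hn⟩ := Nat.find_spec hex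
    exact ⟨c, hc, fun c' hc' => by rw [hn]; exact Nat.find_min' hex ⟨c', hc', rfl⟩⟩
  have hdv5 : degN G v ≤ 5 := by rcases hv with h | h <;> omega
  have hdv4 : 4 ≤ degN G v := by rcases hv with h | h <;> omega
  -- extending c to v with color i fails
  have hnotcol : ∀ i : ℕ, i = 3 ∨ i = 4 →
      ∃ x, ¬ ({w | G.Adj x w ∧ (Function.update c v i) w =
        (Function.update c v i) x}.ncard ≤ (Function.update c v i) x) := by
    intro i hi
    by_contra h
    push_neg at h
    refine hnc ⟨Function.update c v i, ?_, h⟩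
    intro x
    rcases eq_or_ne x v with rfl | hx
    · simpa using hi
    · rw [Function.update_of_ne hx]; exact hc.1 x
  obtain ⟨u, hu⟩ := hnotcol 4 (Or.inr rfl)
  push_neg at hu
  obtain huv | huv := eq_or_ne u v
  · rw [huv] at hu
    -- v has at least 5 neighbors colored 4, hence all neighbors colored 4
    rw [Function.update_self] at hu
    have hA : {w | G.Adj v w ∧ Function.update c v 4 w = 4}
        = {w | G.Adj v w ∧ c w = 4} := by
      ext w
      simp only [Set.mem_setOf_eq]
      constructor
      · rintro ⟨ha, hw⟩; rw [Function.update_of_ne ha.ne'] at hw; exact ⟨ha, hw⟩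
      · rintro ⟨ha, hw⟩; rw [Function.update_of_ne ha.ne']; exact ⟨ha, hw⟩
    rw [hA] at hu
    have hsub : {w | G.Adj v w ∧ c w = 4} ⊆ {w | G.Adj v w} := fun w hw => hw.1
    have hNle : {w | G.Adj v w}.ncard ≤ {w | G.Adj v w ∧ c w = 4}.ncard := by
      have h5 : {w | G.Adj v w}.ncard ≤ 5 := hdv5
      omega
    have heq := Set.eq_of_subset_of_ncard_le hsub hNle
    have hall : ∀ w, G.Adj v w → c w = 4 := by
      intro w hw
      have : w ∈ {w | G.Adj v w ∧ c w = 4} := heq ▸ hw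
      exact this.2
    -- then coloring v with 3 works, contradiction
    refine hnc ⟨Function.update c v 3, ?_, ?_⟩
    · intro x
      rcases eq_or_ne x v with rfl | hx
      · simp
      · rw [Function.update_of_ne hx]; exact hc.1 x
    · intro x
      obtain hx | hx := eq_or_ne x v
      · rw [hx, Function.update_self]
        have hemp : {w | G.Adj v w ∧ Function.update c v 3 w = 3} = ∅ := by
          ext w
          simp only [Set.mem_setOf_eq, Set.mem_empty_iff_false, iff_false, not_and]
          intro ha hw
          rw [Function.update_of_ne ha.ne', hall w ha] at hw
          omega
        rw [hemp]
        simp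
      · rw [Function.update_of_ne hx]
        have hsub2 : {w | G.Adj x w ∧ Function.update c v 3 w = c x}
            ⊆ {w | (deleteVert G v).Adj x w ∧ c w = c x} := by
          rintro w ⟨ha, hw⟩
          rcases eq_or_ne w v with rfl | hwv
          · rw [Function.update_self] at hw
            have h4 := hall x ha.symm
            omega
          · rw [Function.update_of_ne hwv] at hw
            exact ⟨⟨ha, hx, hwv⟩, hw⟩
        exact (Set.ncard_le_ncard hsub2).trans (hc.2 x)
  · -- u ≠ v : u is a 4-saturated neighbor of v
    rw [Function.update_of_ne huv] at hu
    -- v must belong to the offending set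
    have hvmem : v ∈ {w | G.Adj u w ∧ Function.update c v 4 w = c u} := by
      by_contra hvm
      have hsub : {w | G.Adj u w ∧ Function.update c v 4 w = c u}
          ⊆ {w | (deleteVert G v).Adj u w ∧ c w = c u} := by
        rintro w ⟨ha, hw⟩
        have hwv : w ≠ v := by rintro rfl; exact hvm ⟨ha, hw⟩
        rw [Function.update_of_ne hwv] at hw
        exact ⟨⟨ha, huv, hwv⟩, hw⟩
      have := (Set.ncard_le_ncard hsub).trans (hc.2 u)
      omega
    obtain ⟨hadj_uv, hval⟩ := hvmem
    rw [Function.update_self] at hval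
    have hcu : c u = 4 := hval.symm
    have hadj_vu : G.Adj v u := hadj_uv.symm
    -- the set of neighbors of u (in G - v) colored 4 has exactly 4 elements
    have hBle : {w | (deleteVert G v).Adj u w ∧ c w = c u}.ncard ≤ 4 := by
      have := hc.2 u; omega
    have hBge : 4 ≤ {w | (deleteVert G v).Adj u w ∧ c w = c u}.ncard := by
      have hsub : {w | G.Adj u w ∧ Function.update c v 4 w = c u}
          ⊆ insert v {w | (deleteVert G v).Adj u w ∧ c w = c u} := by
        rintro w ⟨ha, hw⟩
        rcases eq_or_ne w v with rfl | hwv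
        · exact Set.mem_insert _ _
        · rw [Function.update_of_ne hwv] at hw
          exact Set.mem_insert_of_mem _ ⟨⟨ha, huv, hwv⟩, hw⟩
      have h1 := (Set.ncard_le_ncard hsub).trans
        (Set.ncard_insert_le v {w | (deleteVert G v).Adj u w ∧ c w = c u})
      omega
    have hB : {w | (deleteVert G v).Adj u w ∧ c w = c u}.ncard = 4 := le_antisymm hBle hBge
    have hvB : v ∉ {w | (deleteVert G v).Adj u w ∧ c w = c u} := by
      rintro ⟨hd, -⟩; exact hd.2.2 rfl
    have hsubN : insert v {w | (deleteVert G v).Adj u w ∧ c w = c u} ⊆ {w | G.Adj u w} := by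
      rintro w (rfl | ⟨hd, -⟩)
      · exact hadj_uv
      · exact hd.1
    have hdeg5 : 5 ≤ degN G u := by
      have h1 : (insert v {w | (deleteVert G v).Adj u w ∧ c w = c u}).ncard
          = {w | (deleteVert G v).Adj u w ∧ c w = c u}.ncard + 1 :=
        Set.ncard_insert_of_notMem hvB
      have h2 := Set.ncard_le_ncard hsubN (Set.toFinite _)
      unfold degN
      omega
    have hcu' := hcon u hadj_vu
    have hdeg8 : degN G u ≤ 8 := by have := hcu'.1; omega
    -- key fact: any neighbor of u other than v colored 3 has degree ≤ 2
    have hL : ∀ y, G.Adj u y → y ≠ v → c y = 3 → degN G y ≤ 2 := by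
      intro y hy hyv hy3
      rcases Nat.lt_or_ge (degN G u) 6 with h5 | h6
      · -- deg u = 5 : all non-v neighbors of u are colored 4
        have hNeq := Set.eq_of_subset_of_ncard_le hsubN (by
          have h1 : (insert v {w | (deleteVert G v).Adj u w ∧ c w = c u}).ncard
              = {w | (deleteVert G v).Adj u w ∧ c w = c u}.ncard + 1 :=
            Set.ncard_insert_of_notMem hvB
          have h2 : {w | G.Adj u w}.ncard ≤ 5 := by unfold degN at h5; omega
          omega)
        have hyN : y ∈ insert v {w | (deleteVert G v).Adj u w ∧ c w = c u} := hNeq ▸ hy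
        rcases hyN with rfl | ⟨-, hy4⟩
        · exact absurd rfl hyv
        · omega
      · -- 6 ≤ deg u ≤ 8 : u has at most one 3⁺-neighbor, which is v
        have htpn : tpn G u < 2 := hcu'.2 h6
        by_contra hdy
        push_neg at hdy
        have hpair : {v, y} ⊆ {w | G.Adj u w ∧ 3 ≤ degN G w} := by
          rintro w (rfl | rfl)
          · exact ⟨hadj_uv, by omega⟩
          · exact ⟨hy, by omega⟩
        have h2 : 2 ≤ tpn G u := by
          have := Set.ncard_le_ncard hpair (Set.toFinite _)
          rw [Set.ncard_pair (Ne.symm hyv)] at this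
          unfold tpn
          omega
        omega
    -- recolor u to 3: still a valid coloring of G - v, with fewer 4's
    have hc' : IsColoring34 (deleteVert G v) (Function.update c u 3) := by
      constructor
      · intro x
        rcases eq_or_ne x u with rfl | hx
        · simp
        · rw [Function.update_of_ne hx]; exact hc.1 x
      · intro x
        obtain hxu | hxu := eq_or_ne x u
        · rw [hxu]
          -- at u itself : at most 3 neighbors colored 3
          rw [Function.update_self]
          have hEq : {w | (deleteVert G v).Adj u w ∧ Function.update c u 3 w = 3}
              = {w | (deleteVert G v).Adj u w ∧ c w = 3} := by
            ext w
            simp only [Set.mem_setOf_eq]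
            constructor
            · rintro ⟨hd, hw⟩
              rw [Function.update_of_ne hd.1.ne'] at hw
              exact ⟨hd, hw⟩
            · rintro ⟨hd, hw⟩
              rw [Function.update_of_ne hd.1.ne']
              exact ⟨hd, hw⟩
          rw [hEq]
          -- the 3-colored and 4-colored neighbor sets are disjoint inside N_{G-v}(u)
          have hdisj : Disjoint {w | (deleteVert G v).Adj u w ∧ c w = 3}
              {w | (deleteVert G v).Adj u w ∧ c w = c u} := by
            rw [Set.disjoint_left]
            rintro w ⟨-, h3⟩ ⟨-, h4⟩
            omega
          have hunion : {w | (deleteVert G v).Adj u w ∧ c w = 3}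
              ∪ {w | (deleteVert G v).Adj u w ∧ c w = c u} ⊆ {w | (deleteVert G v).Adj u w} :=
            fun w hw => by rcases hw with h | h <;> exact h.1
          have hcard := Set.ncard_union_eq hdisj
          have hle := Set.ncard_le_ncard hunion (Set.toFinite _)
          -- |N_{G-v}(u)| ≤ deg u - 1 ≤ 7
          have hND : {w | (deleteVert G v).Adj u w}.ncard + 1 ≤ degN G u := by
            have hvND : v ∉ {w | (deleteVert G v).Adj u w} := fun h => h.2.2 rfl
            have h1 : (insert v {w | (deleteVert G v).Adj u w}).ncard
                = {w | (deleteVert G v).Adj u w}.ncard + 1 :=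
              Set.ncard_insert_of_notMem hvND
            have hsub3 : insert v {w | (deleteVert G v).Adj u w} ⊆ {w | G.Adj u w} := by
              rintro w (rfl | hd)
              · exact hadj_uv
              · exact hd.1
            have h2 := Set.ncard_le_ncard hsub3 (Set.toFinite _)
            unfold degN
            omega
          omega
        · rw [Function.update_of_ne hxu]
          rcases hc.1 x with hx3 | hx4
          · -- x colored 3
            by_cases hxadj : (deleteVert G v).Adj x u
            · -- x is a ≤2-degree vertex, trivial bound
              have hxd : degN G x ≤ 2 := hL x hxadj.symm.1 hxadj.2.1 hx3
              have hsub4 : {w | (deleteVert G v).Adj x w ∧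
                  Function.update c u 3 w = c x} ⊆ {w | G.Adj x w} := fun w hw => hw.1.1
              have := Set.ncard_le_ncard hsub4 (Set.toFinite _)
              unfold degN at hxd
              omega
            · -- x not adjacent to u : its count is unchanged
              have hsub5 : {w | (deleteVert G v).Adj x w ∧ Function.update c u 3 w = c x}
                  ⊆ {w | (deleteVert G v).Adj x w ∧ c w = c x} := by
                rintro w ⟨hd, hw⟩
                have hwu : w ≠ u := by rintro rfl; exact hxadj hd
                rw [Function.update_of_ne hwu] at hw
                exact ⟨hd, hw⟩
              exact (Set.ncard_le_ncard hsub5).trans (hc.2 x)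
          · -- x colored 4 : it can only lose same-colored neighbors
            have hsub6 : {w | (deleteVert G v).Adj x w ∧ Function.update c u 3 w = c x}
                ⊆ {w | (deleteVert G v).Adj x w ∧ c w = c x} := by
              rintro w ⟨hd, hw⟩
              rcases eq_or_ne w u with rfl | hwu
              · rw [Function.update_self] at hw
                omega
              · rw [Function.update_of_ne hwu] at hw
                exact ⟨hd, hw⟩
            exact (Set.ncard_le_ncard hsub6).trans (hc.2 x)
    -- fewer vertices colored 4: contradiction with minimality
    have hss : {x | Function.update c u 3 x = 4} ⊆ {x | c x = 4} \ {u} := by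
      intro y hy
      rcases eq_or_ne y u with rfl | hyu
      · rw [Set.mem_setOf_eq, Function.update_self] at hy
        omega
      · rw [Set.mem_setOf_eq, Function.update_of_ne hyu] at hy
        exact ⟨hy, hyu⟩
    have hlt : {x | Function.update c u 3 x = 4}.ncard < {x | c x = 4}.ncard := by
      have h1 := Set.ncard_le_ncard hss (Set.toFinite _)
      have h2 := Set.ncard_diff_singleton_lt_of_mem (s := {x | c x = 4}) (a := u) hcu
      omega
    have := hcmin _ hc'
    omega
end

section
/- Let G be a minimally non-(3,4)-colorable graph with girth at least 5, and let u_1 u_2 u_3 u_4 u_5 u_6 be a 6-cycle in G such that u_1, u_3, u_5 have degree 2 and u_4 has degree 5. Then u_2 and u_6 both have degree at least 7. -/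
lemma key_lemma {V : Type*} [Fintype V] (G : SimpleGraph V)
    (hG : MinNonColorable34 G) (hgirth : GirthAtLeast5 G)
    (u1 u2 u3 u4 u5 u6 : V)
    (hnd : ([u1, u2, u3, u4, u5, u6] : List V).Nodup)
    (a12 : G.Adj u1 u2) (a23 : G.Adj u2 u3) (a34 : G.Adj u3 u4)
    (a45 : G.Adj u4 u5) (a56 : G.Adj u5 u6) (a61 : G.Adj u6 u1)
    (d1 : degN G u1 = 2) (d3 : degN G u3 = 2) (d5 : degN G u5 = 2)
    (d4 : degN G u4 = 5) : 7 ≤ degN G u2 := by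
  classical
  by_contra hdeg
  push_neg at hdeg
  have h2le : degN G u2 ≤ 6 := by omega
  have hnd' := hnd
  simp only [List.nodup_cons, List.mem_cons, List.not_mem_nil, or_false, List.nodup_nil,
    and_true, not_or, List.mem_singleton] at hnd'
  obtain ⟨⟨e12, e13, e14, e15, e16⟩, ⟨e23, e24, e25, e26⟩, ⟨e34, e35, e36⟩, ⟨e45, e46⟩, e56, -⟩ := hnd'
  have n42 : ¬ G.Adj u4 u2 := hgirth.1 u2 u3 u4 a23 a34
  have n41 : ¬ G.Adj u4 u1 := hgirth.2 u1 u2 u3 u4 e13 e24 a12 a23 a34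
  have n63 : ¬ G.Adj u6 u3 := hgirth.2 u3 u4 u5 u6 e35 e46 a34 a45 a56
  have hNeq : ∀ v a b : V, degN G v = 2 → G.Adj v a → G.Adj v b → a ≠ b →
      {w | G.Adj v w} = {a, b} := by
    intro v a b hd ha hb hab
    have h1 : ({a, b} : Set V) ⊆ {w | G.Adj v w} := by
      intro w hw
      rcases hw with rfl | hw
      · exact ha
      · rw [Set.mem_singleton_iff] at hw; subst hw; exact hb
    have h2 : {w | G.Adj v w}.ncard ≤ ({a, b} : Set V).ncard := by
      have hcc : {w | G.Adj v w}.ncard = 2 := hd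
      rw [hcc, Set.ncard_pair hab]
    exact (Set.eq_of_subset_of_ncard_le h1 h2 (Set.toFinite _)).symm
  have hN1 : {w | G.Adj u1 w} = {u2, u6} := hNeq u1 u2 u6 d1 a12 a61.symm e26
  have hN3 : {w | G.Adj u3 w} = {u2, u4} := hNeq u3 u2 u4 d3 a23.symm a34 e24
  have hN5 : {w | G.Adj u5 w} = {u4, u6} := hNeq u5 u4 u6 d5 a45.symm a56 e46
  have hadj1 : ∀ v, G.Adj v u1 → v = u2 ∨ v = u6 := by
    intro v h
    have hm : v ∈ {w | G.Adj u1 w} := h.symm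
    rw [hN1] at hm; simpa using hm
  have hadj3 : ∀ v, G.Adj v u3 → v = u2 ∨ v = u4 := by
    intro v h
    have hm : v ∈ {w | G.Adj u3 w} := h.symm
    rw [hN3] at hm; simpa using hm
  have hadj5 : ∀ v, G.Adj v u5 → v = u4 ∨ v = u6 := by
    intro v h
    have hm : v ∈ {w | G.Adj u5 w} := h.symm
    rw [hN5] at hm; simpa using hm
  obtain ⟨c, hcol, hcnt⟩ := hG.2.2 s(u3, u4) a34
  have hGH : ∀ v w : V, v ≠ u3 → v ≠ u4 → G.Adj v w → (G.deleteEdges {s(u3, u4)}).Adj v w := by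
    intro v w h3 h4 h
    rw [SimpleGraph.deleteEdges_adj]
    refine ⟨h, ?_⟩
    simp only [Set.mem_singleton_iff, Sym2.eq_iff]
    rintro (⟨rfl, rfl⟩ | ⟨rfl, rfl⟩)
    · exact h3 rfl
    · exact h4 rfl
  have hH : ∀ v, v ≠ u3 → v ≠ u4 →
      ∀ S : Set V, S ⊆ {w | G.Adj v w ∧ c w = c v} → S.ncard ≤ c v := by
    intro v h3 h4 S hS
    have hsub : S ⊆ {w | (G.deleteEdges {s(u3, u4)}).Adj v w ∧ c w = c v} := by
      intro w hw
      obtain ⟨hw1, hw2⟩ := hS hw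
      exact ⟨hGH v w h3 h4 hw1, hw2⟩
    exact le_trans (Set.ncard_le_ncard hsub (Set.toFinite _)) (hcnt v)
  have hdeg2 : ∀ (v : V), degN G v = 2 → ∀ (c' : V → ℕ), c' v = 3 ∨ c' v = 4 →
      {w | G.Adj v w ∧ c' w = c' v}.ncard ≤ c' v := by
    intro v hd c' hcv
    have hb : {w | G.Adj v w ∧ c' w = c' v}.ncard ≤ degN G v :=
      Set.ncard_le_ncard (fun w hw => hw.1) (Set.toFinite _)
    omega
  have hbad : ∀ c' : V → ℕ, (∀ v, c' v = 3 ∨ c' v = 4) →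
      ∃ v, c' v < {w | G.Adj v w ∧ c' w = c' v}.ncard := by
    intro c' hcol'
    by_contra h
    push_neg at h
    exact hG.1 ⟨c', hcol', h⟩
  have hcol_upd : ∀ (c' : V → ℕ), (∀ v, c' v = 3 ∨ c' v = 4) → ∀ (a : V) (x : ℕ),
      x = 3 ∨ x = 4 → ∀ v, Function.update c' a x v = 3 ∨ Function.update c' a x v = 4 := by
    intro c' h a x hx v
    rcases eq_or_ne v a with rfl | hv
    · simpa using hx
    · rw [Function.update_of_ne hv]; exact h v
  -- Step 1: the bad vertex of c on G is u4, and c u4 = 3, c u3 = 3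
  obtain ⟨v0, hv0⟩ := hbad c hcol
  have hv04 : v0 = u4 := by
    by_contra h4
    rcases eq_or_ne v0 u3 with h3 | h3
    · rw [h3] at hv0
      have := hdeg2 u3 d3 c (hcol u3)
      omega
    · exact absurd hv0 (not_lt.mpr (hH v0 h3 h4 _ (fun w hw => hw)))
  rw [hv04] at hv0
  have hcu4 : c u4 = 3 := by
    rcases hcol u4 with h | h
    · exact h
    exfalso
    have hall : ∀ w, G.Adj u4 w → c w = 4 := by
      intro w hw
      have hsub : {w | G.Adj u4 w ∧ c w = c u4} ⊆ {w | G.Adj u4 w} := fun x hx => hx.1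
      have hb : {w | G.Adj u4 w ∧ c w = c u4}.ncard ≤ degN G u4 :=
        Set.ncard_le_ncard (fun x hx => hx.1) (Set.toFinite _)
      have h5 : {w | G.Adj u4 w}.ncard = 5 := d4
      have hle : {w | G.Adj u4 w}.ncard ≤ {w | G.Adj u4 w ∧ c w = c u4}.ncard := by omega
      have heq := Set.eq_of_subset_of_ncard_le hsub hle (Set.toFinite _)
      have hm : w ∈ {w | G.Adj u4 w ∧ c w = c u4} := by rw [heq]; exact hw
      rw [h] at hm
      exact hm.2
    apply hG.1
    refine ⟨Function.update c u4 3, hcol_upd c hcol u4 3 (Or.inl rfl), ?_⟩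
    intro v
    rcases eq_or_ne u4 v with rfl | hv
    · have hempty : {w | G.Adj u4 w ∧ Function.update c u4 3 w = Function.update c u4 3 u4}
          = ∅ := by
        ext w
        simp only [Set.mem_setOf_eq, Set.mem_empty_iff_false, iff_false, not_and]
        intro hw
        have hwne : w ≠ u4 := fun hh => G.loopless.irrefl u4 (hh ▸ hw)
        rw [Function.update_of_ne hwne, Function.update_self, hall w hw]
        omega
      rw [hempty, Set.ncard_empty]
      omega
    · have hcv : Function.update c u4 3 v = c v := Function.update_of_ne hv.symm 3 c
      have hsub : {w | G.Adj v w ∧ Function.update c u4 3 w = Function.update c u4 3 v} ⊆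
          {w | G.Adj v w ∧ c w = c v} := by
        rintro w ⟨hw1, hw2⟩
        rw [hcv] at hw2
        rcases eq_or_ne u4 w with rfl | hwne
        · exfalso
          rw [Function.update_self] at hw2
          have h4v := hall v hw1.symm
          omega
        · rw [Function.update_of_ne hwne.symm] at hw2; exact ⟨hw1, hw2⟩
      rcases eq_or_ne u3 v with rfl | h3
      · have hb := hdeg2 u3 d3 (Function.update c u4 3)
          (by rw [hcv]; exact hcol u3)
        exact hb
      · have hb := hH v h3.symm hv.symm _ hsub
        omega
  rw [hcu4] at hv0
  -- hv0 : 3 < {w | G.Adj u4 w ∧ c w = 3}.ncard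
  have hH4 : ∀ S : Set V, S ⊆ {w | G.Adj u4 w ∧ c w = 3} → u3 ∉ S → S.ncard ≤ 3 := by
    intro S hS hu3
    have hsub : S ⊆ {w | (G.deleteEdges {s(u3, u4)}).Adj u4 w ∧ c w = c u4} := by
      intro w hw
      obtain ⟨hw1, hw2⟩ := hS hw
      have hwne : w ≠ u3 := fun hh => hu3 (hh ▸ hw)
      refine ⟨?_, by rw [hcu4]; exact hw2⟩
      rw [SimpleGraph.deleteEdges_adj]
      refine ⟨hw1, ?_⟩
      simp only [Set.mem_singleton_iff, Sym2.eq_iff]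
      rintro (⟨h', -⟩ | ⟨-, h'⟩)
      · exact e34 h'.symm
      · exact hwne h'
    have hb := le_trans (Set.ncard_le_ncard hsub (Set.toFinite _)) (hcnt u4)
    omega
  have hcu3 : c u3 = 3 := by
    rcases hcol u3 with h | h
    · exact h
    exfalso
    have hb : {w | G.Adj u4 w ∧ c w = 3}.ncard ≤ 3 := by
      apply hH4 _ (fun w hw => hw)
      rintro ⟨-, hc3⟩
      omega
    omega
  have hu3S : u3 ∈ {w | G.Adj u4 w ∧ c w = 3} := ⟨a34.symm, hcu3⟩
  have hS4card : {w | G.Adj u4 w ∧ c w = 3}.ncard = 4 := by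
    have h1 := hH4 ({w | G.Adj u4 w ∧ c w = 3} \ {u3}) (fun w hw => hw.1) (fun hh => hh.2 rfl)
    have h2 : ({w | G.Adj u4 w ∧ c w = 3} \ {u3}).ncard + 1 = {w | G.Adj u4 w ∧ c w = 3}.ncard :=
      Set.ncard_diff_singleton_add_one hu3S (Set.toFinite _)
    omega
  -- Step 2: c u5 = 3
  have hcu5 : c u5 = 3 := by
    rcases hcol u5 with h | h
    · exact h
    exfalso
    have hpart : {w | G.Adj u4 w} = {w | G.Adj u4 w ∧ c w = 3} ∪ {w | G.Adj u4 w ∧ c w = 4} := by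
      ext w
      simp only [Set.mem_setOf_eq, Set.mem_union]
      constructor
      · intro hw
        rcases hcol w with h' | h'
        · exact Or.inl ⟨hw, h'⟩
        · exact Or.inr ⟨hw, h'⟩
      · rintro (⟨hw, -⟩ | ⟨hw, -⟩) <;> exact hw
    have hdisj : Disjoint {w | G.Adj u4 w ∧ c w = 3} {w | G.Adj u4 w ∧ c w = 4} := by
      rw [Set.disjoint_left]
      rintro w ⟨-, h3⟩ ⟨-, h4⟩
      omega
    have hcard4 : {w | G.Adj u4 w ∧ c w = 4}.ncard = 1 := by
      have h5 : {w | G.Adj u4 w}.ncard = 5 := d4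
      rw [hpart, Set.ncard_union_eq hdisj (Set.toFinite _) (Set.toFinite _)] at h5
      omega
    have hsingle : {w | G.Adj u4 w ∧ c w = 4} = {u5} := by
      obtain ⟨a, ha⟩ := Set.ncard_eq_one.mp hcard4
      have hm : u5 ∈ {w | G.Adj u4 w ∧ c w = 4} := ⟨a45, h⟩
      rw [ha] at hm ⊢
      rw [Set.mem_singleton_iff] at hm
      rw [hm]
    apply hG.1
    refine ⟨Function.update c u4 4, hcol_upd c hcol u4 4 (Or.inr rfl), ?_⟩
    intro v
    rcases eq_or_ne u4 v with rfl | hv4'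
    · have hsub : {w | G.Adj u4 w ∧ Function.update c u4 4 w = Function.update c u4 4 u4} ⊆
          ({u5} : Set V) := by
        rintro w ⟨hw1, hw2⟩
        have hwne : w ≠ u4 := fun hh => G.loopless.irrefl u4 (hh ▸ hw1)
        rw [Function.update_of_ne hwne, Function.update_self] at hw2
        rw [← hsingle]
        exact ⟨hw1, hw2⟩
      have hb := Set.ncard_le_ncard hsub (Set.toFinite _)
      rw [Set.ncard_singleton] at hb
      have h44 : Function.update c u4 4 u4 = 4 := Function.update_self u4 4 c
      omega
    rcases eq_or_ne u5 v with rfl | hv5'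
    · exact hdeg2 u5 d5 _ (by rw [Function.update_of_ne (fun hh => e45 hh.symm)]; exact hcol u5)
    rcases eq_or_ne u3 v with rfl | hv3'
    · exact hdeg2 u3 d3 _ (by rw [Function.update_of_ne e34]; exact hcol u3)
    · have hcv : Function.update c u4 4 v = c v := Function.update_of_ne hv4'.symm 4 c
      have hsub : {w | G.Adj v w ∧ Function.update c u4 4 w = Function.update c u4 4 v} ⊆
          {w | G.Adj v w ∧ c w = c v} := by
        rintro w ⟨hw1, hw2⟩
        rw [hcv] at hw2
        rcases eq_or_ne u4 w with rfl | hwne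
        · exfalso
          rw [Function.update_self] at hw2
          have hm : v ∈ {w | G.Adj u4 w ∧ c w = 4} := ⟨hw1.symm, hw2.symm⟩
          rw [hsingle, Set.mem_singleton_iff] at hm
          exact hv5' hm.symm
        · rw [Function.update_of_ne hwne.symm] at hw2; exact ⟨hw1, hw2⟩
      have hb := hH v hv3'.symm hv4'.symm _ hsub
      omega
  have hu5S : u5 ∈ {w | G.Adj u4 w ∧ c w = 3} := ⟨a45, hcu5⟩
  -- Step 3: c u2 = 4 and u2 is 4-saturated
  obtain ⟨v1, hv1⟩ := hbad (Function.update c u3 4) (hcol_upd c hcol u3 4 (Or.inr rfl))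
  have hc2u3 : Function.update c u3 4 u3 = 4 := Function.update_self u3 4 c
  have hc2other : ∀ w : V, w ≠ u3 → Function.update c u3 4 w = c w :=
    fun w hh => Function.update_of_ne hh 4 c
  have hc2u4 : Function.update c u3 4 u4 = 3 := by
    rw [hc2other u4 (fun hh => e34 hh.symm)]; exact hcu4
  have hv1u2 : v1 = u2 := by
    by_contra hne2
    rcases eq_or_ne u3 v1 with rfl | hne3
    · have := hdeg2 u3 d3 (Function.update c u3 4) (Or.inr hc2u3)
      omega
    rcases eq_or_ne u4 v1 with rfl | hne4
    · have hsub : {w | G.Adj u4 w ∧ Function.update c u3 4 w = Function.update c u3 4 u4} ⊆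
          {w | G.Adj u4 w ∧ c w = 3} \ {u3} := by
        rintro w ⟨hw1, hw2⟩
        rw [hc2u4] at hw2
        have hwne : w ≠ u3 := by
          rintro rfl
          rw [hc2u3] at hw2
          omega
        rw [hc2other w hwne] at hw2
        exact ⟨⟨hw1, hw2⟩, hwne⟩
      have hb := Set.ncard_le_ncard hsub (Set.toFinite _)
      have hdm : ({w | G.Adj u4 w ∧ c w = 3} \ {u3}).ncard + 1 =
          {w | G.Adj u4 w ∧ c w = 3}.ncard :=
        Set.ncard_diff_singleton_add_one hu3S (Set.toFinite _)
      omega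
    · have hx : Function.update c u3 4 v1 = c v1 := hc2other v1 hne3.symm
      have hsub : {w | G.Adj v1 w ∧ Function.update c u3 4 w = Function.update c u3 4 v1} ⊆
          {w | G.Adj v1 w ∧ c w = c v1} := by
        rintro w ⟨hw1, hw2⟩
        rw [hx] at hw2
        have hwne : w ≠ u3 := by
          rintro rfl
          rcases hadj3 v1 hw1 with hh | hh
          · exact hne2 hh
          · exact hne4 hh.symm
        rw [hc2other w hwne] at hw2
        exact ⟨hw1, hw2⟩
      have hb := hH v1 hne3.symm hne4.symm _ hsub
      omega
  rw [hv1u2] at hv1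
  have hc2u2 : Function.update c u3 4 u2 = c u2 := hc2other u2 e23
  have hcu2 : c u2 = 4 := by
    rcases hcol u2 with h | h
    swap
    · exact h
    exfalso
    have hsub : {w | G.Adj u2 w ∧ Function.update c u3 4 w = Function.update c u3 4 u2} ⊆
        {w | G.Adj u2 w ∧ c w = c u2} := by
      rintro w ⟨hw1, hw2⟩
      rw [hc2u2] at hw2
      have hwne : w ≠ u3 := by
        rintro rfl
        rw [hc2u3] at hw2
        omega
      rw [hc2other w hwne] at hw2
      exact ⟨hw1, hw2⟩
    have hb := hH u2 e23 e24 _ hsub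
    omega
  have hTcard : {w | G.Adj u2 w ∧ c w = 4}.ncard = 4 := by
    have hub := hH u2 e23 e24 {w | G.Adj u2 w ∧ c w = 4}
      (by rintro w ⟨hw1, hw2⟩; exact ⟨hw1, by rw [hcu2]; exact hw2⟩)
    have hsub : {w | G.Adj u2 w ∧ Function.update c u3 4 w = Function.update c u3 4 u2} ⊆
        insert u3 {w | G.Adj u2 w ∧ c w = 4} := by
      rintro w ⟨hw1, hw2⟩
      rcases eq_or_ne u3 w with rfl | hwne
      · exact Set.mem_insert _ _
      · rw [hc2other w hwne.symm, hc2u2, hcu2] at hw2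
        exact Set.mem_insert_of_mem _ ⟨hw1, hw2⟩
    have h1 := Set.ncard_le_ncard hsub (Set.toFinite _)
    have h2 := Set.ncard_insert_le u3 {w | G.Adj u2 w ∧ c w = 4}
    omega
  have h3set2 : {w | G.Adj u2 w ∧ c w = 3}.ncard ≤ 2 := by
    have hpart : {w | G.Adj u2 w} = {w | G.Adj u2 w ∧ c w = 3} ∪ {w | G.Adj u2 w ∧ c w = 4} := by
      ext w
      simp only [Set.mem_setOf_eq, Set.mem_union]
      constructor
      · intro hw
        rcases hcol w with h' | h'
        · exact Or.inl ⟨hw, h'⟩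
        · exact Or.inr ⟨hw, h'⟩
      · rintro (⟨hw, -⟩ | ⟨hw, -⟩) <;> exact hw
    have hdisj : Disjoint {w | G.Adj u2 w ∧ c w = 3} {w | G.Adj u2 w ∧ c w = 4} := by
      rw [Set.disjoint_left]
      rintro w ⟨-, h3⟩ ⟨-, h4⟩
      omega
    have hc6 : {w | G.Adj u2 w}.ncard ≤ 6 := h2le
    rw [hpart, Set.ncard_union_eq hdisj (Set.toFinite _) (Set.toFinite _)] at hc6
    omega
  -- Step 4: branch on the color of u1
  rcases hcol u1 with hu13 | hu14
  · -- c u1 = 3 : recolor u3 to 4 and u2 to 3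
    have hpair : ({u1, u3} : Set V) ⊆ {w | G.Adj u2 w ∧ c w = 3} := by
      intro w hw
      rcases hw with rfl | hw
      · exact ⟨a12.symm, hu13⟩
      · rw [Set.mem_singleton_iff] at hw; subst hw; exact ⟨a23, hcu3⟩
    have h3eq : {w | G.Adj u2 w ∧ c w = 3} = {u1, u3} := by
      refine (Set.eq_of_subset_of_ncard_le hpair ?_ (Set.toFinite _)).symm
      rw [Set.ncard_pair e13]
      exact h3set2
    apply hG.1
    refine ⟨Function.update (Function.update c u3 4) u2 3,
      hcol_upd _ (hcol_upd c hcol u3 4 (Or.inr rfl)) u2 3 (Or.inl rfl), ?_⟩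
    have hc5u2 : Function.update (Function.update c u3 4) u2 3 u2 = 3 :=
      Function.update_self u2 3 _
    have hc5u3 : Function.update (Function.update c u3 4) u2 3 u3 = 4 := by
      rw [Function.update_of_ne (fun hh => e23 hh.symm)]; exact hc2u3
    have hc5other : ∀ w : V, w ≠ u2 → w ≠ u3 →
        Function.update (Function.update c u3 4) u2 3 w = c w := by
      intro w h2' h3'
      rw [Function.update_of_ne h2', hc2other w h3']
    intro v
    rcases eq_or_ne u1 v with rfl | hvne1
    · exact hdeg2 u1 d1 _ (by rw [hc5other u1 e12 e13]; exact hcol u1)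
    rcases eq_or_ne u3 v with rfl | hvne3
    · exact hdeg2 u3 d3 _ (Or.inr hc5u3)
    rcases eq_or_ne u2 v with rfl | hvne2
    · have hsub : {w | G.Adj u2 w ∧ Function.update (Function.update c u3 4) u2 3 w
          = Function.update (Function.update c u3 4) u2 3 u2} ⊆ ({u1} : Set V) := by
        rintro w ⟨hw1, hw2⟩
        rw [hc5u2] at hw2
        have hw2' : w ≠ u2 := fun hh => G.loopless.irrefl u2 (hh ▸ hw1)
        have hw3' : w ≠ u3 := by
          rintro rfl
          rw [hc5u3] at hw2
          omega
        rw [hc5other w hw2' hw3'] at hw2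
        have hm : w ∈ ({u1, u3} : Set V) := by rw [← h3eq]; exact ⟨hw1, hw2⟩
        rcases hm with rfl | hm
        · rfl
        · rw [Set.mem_singleton_iff] at hm; exact absurd hm hw3'
      have hb := Set.ncard_le_ncard hsub (Set.toFinite _)
      rw [Set.ncard_singleton] at hb
      omega
    rcases eq_or_ne u4 v with rfl | hvne4
    · have hcv : Function.update (Function.update c u3 4) u2 3 u4 = 3 := by
        rw [hc5other u4 (fun hh => e24 hh.symm) (fun hh => e34 hh.symm)]; exact hcu4
      have hb : {w | G.Adj u4 w ∧ Function.update (Function.update c u3 4) u2 3 w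
          = Function.update (Function.update c u3 4) u2 3 u4}.ncard ≤ 3 := by
        apply hH4
        · rintro w ⟨hw1, hw2⟩
          rw [hcv] at hw2
          have hw2' : w ≠ u2 := by
            rintro rfl
            exact n42 hw1
          have hw3' : w ≠ u3 := by
            rintro rfl
            rw [hc5u3] at hw2
            omega
          rw [hc5other w hw2' hw3'] at hw2
          exact ⟨hw1, hw2⟩
        · rintro ⟨-, hh⟩
          rw [hcv, hc5u3] at hh
          omega
      omega
    · have hcv : Function.update (Function.update c u3 4) u2 3 v = c v :=
        hc5other v hvne2.symm hvne3.symm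
      have hsub : {w | G.Adj v w ∧ Function.update (Function.update c u3 4) u2 3 w
          = Function.update (Function.update c u3 4) u2 3 v} ⊆
          {w | G.Adj v w ∧ c w = c v} := by
        rintro w ⟨hw1, hw2⟩
        rw [hcv] at hw2
        have hw3' : w ≠ u3 := by
          rintro rfl
          rcases hadj3 v hw1 with hh | hh
          · exact hvne2 hh.symm
          · exact hvne4 hh.symm
        have hw2' : w ≠ u2 := by
          rintro rfl
          rw [hc5u2] at hw2
          have hm : v ∈ ({u1, u3} : Set V) := by rw [← h3eq]; exact ⟨hw1.symm, hw2.symm⟩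
          rcases hm with rfl | hm
          · exact hvne1 rfl
          · rw [Set.mem_singleton_iff] at hm; exact hvne3 hm.symm
        rw [hc5other w hw2' hw3'] at hw2
        exact ⟨hw1, hw2⟩
      have hb := hH v hvne3.symm hvne4.symm _ hsub
      omega
  · -- c u1 = 4 : recolor u3 to 4 and u1 to 3, deduce c u6 = 3, then recolor u5 to 4
    have hu1T : u1 ∈ {w | G.Adj u2 w ∧ c w = 4} := ⟨a12.symm, hu14⟩
    obtain ⟨v2, hv2⟩ := hbad (Function.update (Function.update c u3 4) u1 3)
      (hcol_upd _ (hcol_upd c hcol u3 4 (Or.inr rfl)) u1 3 (Or.inl rfl))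
    have hc3u1 : Function.update (Function.update c u3 4) u1 3 u1 = 3 :=
      Function.update_self u1 3 _
    have hc3u3 : Function.update (Function.update c u3 4) u1 3 u3 = 4 := by
      rw [Function.update_of_ne (fun hh => e13 hh.symm)]; exact hc2u3
    have hc3other : ∀ w : V, w ≠ u1 → w ≠ u3 →
        Function.update (Function.update c u3 4) u1 3 w = c w := by
      intro w h1' h3'
      rw [Function.update_of_ne h1', hc2other w h3']
    have hcu6 : c u6 = 3 := by
      rcases eq_or_ne u1 v2 with rfl | hw1
      · have := hdeg2 u1 d1 _ (Or.inl hc3u1)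
        omega
      rcases eq_or_ne u3 v2 with rfl | hw3
      · have := hdeg2 u3 d3 _ (Or.inr hc3u3)
        omega
      rcases eq_or_ne u5 v2 with rfl | hw5
      · have := hdeg2 u5 d5 (Function.update (Function.update c u3 4) u1 3)
          (by rw [hc3other u5 (fun hh => e15 hh.symm) (fun hh => e35 hh.symm)]; exact hcol u5)
        omega
      rcases eq_or_ne u2 v2 with rfl | hw2
      · exfalso
        have hcv : Function.update (Function.update c u3 4) u1 3 u2 = 4 := by
          rw [hc3other u2 (fun hh => e12 hh.symm) e23]; exact hcu2
        have hsub : {w | G.Adj u2 w ∧ Function.update (Function.update c u3 4) u1 3 w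
            = Function.update (Function.update c u3 4) u1 3 u2} ⊆
            insert u3 ({w | G.Adj u2 w ∧ c w = 4} \ {u1}) := by
          rintro w ⟨hw1', hw2'⟩
          rw [hcv] at hw2'
          rcases eq_or_ne u3 w with rfl | hwne3
          · exact Set.mem_insert _ _
          · have hwne1 : w ≠ u1 := by
              rintro rfl
              rw [hc3u1] at hw2'
              omega
            rw [hc3other w hwne1 hwne3.symm] at hw2'
            exact Set.mem_insert_of_mem _ ⟨⟨hw1', hw2'⟩, hwne1⟩
        have hb := Set.ncard_le_ncard hsub (Set.toFinite _)
        have h1 := Set.ncard_insert_le u3 ({w | G.Adj u2 w ∧ c w = 4} \ {u1})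
        have h2 : ({w | G.Adj u2 w ∧ c w = 4} \ {u1}).ncard + 1 =
            {w | G.Adj u2 w ∧ c w = 4}.ncard :=
          Set.ncard_diff_singleton_add_one hu1T (Set.toFinite _)
        omega
      rcases eq_or_ne u4 v2 with rfl | hw4
      · exfalso
        have hcv : Function.update (Function.update c u3 4) u1 3 u4 = 3 := by
          rw [hc3other u4 (fun hh => e14 hh.symm) (fun hh => e34 hh.symm)]; exact hcu4
        have hb := hH4 {w | G.Adj u4 w ∧ Function.update (Function.update c u3 4) u1 3 w
            = Function.update (Function.update c u3 4) u1 3 u4}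
          (by
            rintro w ⟨hw1', hw2'⟩
            rw [hcv] at hw2'
            have hwne1 : w ≠ u1 := by
              rintro rfl
              exact n41 hw1'
            have hwne3 : w ≠ u3 := by
              rintro rfl
              rw [hc3u3] at hw2'
              omega
            rw [hc3other w hwne1 hwne3] at hw2'
            exact ⟨hw1', hw2'⟩)
          (by
            rintro ⟨-, hh⟩
            rw [hcv, hc3u3] at hh
            omega)
        omega
      rcases eq_or_ne u6 v2 with rfl | hw6
      · rcases hcol u6 with h | h
        · exact h
        exfalso
        have hcv : Function.update (Function.update c u3 4) u1 3 u6 = 4 := by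
          rw [hc3other u6 (fun hh => e16 hh.symm) (fun hh => e36 hh.symm)]; exact h
        have hsub : {w | G.Adj u6 w ∧ Function.update (Function.update c u3 4) u1 3 w
            = Function.update (Function.update c u3 4) u1 3 u6} ⊆
            {w | G.Adj u6 w ∧ c w = c u6} := by
          rintro w ⟨hw1', hw2'⟩
          rw [hcv] at hw2'
          have hwne1 : w ≠ u1 := by
            rintro rfl
            rw [hc3u1] at hw2'
            omega
          have hwne3 : w ≠ u3 := by
            rintro rfl
            exact n63 hw1'
          rw [hc3other w hwne1 hwne3] at hw2'
          rw [h]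
          exact ⟨hw1', hw2'⟩
        have hb := hH u6 (fun hh => e36 hh.symm) (fun hh => e46 hh.symm) _ hsub
        omega
      · exfalso
        have hcv : Function.update (Function.update c u3 4) u1 3 v2 = c v2 :=
          hc3other v2 hw1.symm hw3.symm
        have hsub : {w | G.Adj v2 w ∧ Function.update (Function.update c u3 4) u1 3 w
            = Function.update (Function.update c u3 4) u1 3 v2} ⊆
            {w | G.Adj v2 w ∧ c w = c v2} := by
          rintro w ⟨hw1', hw2'⟩
          rw [hcv] at hw2'
          have hwne3 : w ≠ u3 := by
            rintro rfl
            rcases hadj3 v2 hw1' with hh | hh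
            · exact hw2 hh.symm
            · exact hw4 hh.symm
          have hwne1 : w ≠ u1 := by
            rintro rfl
            rcases hadj1 v2 hw1' with hh | hh
            · exact hw2 hh.symm
            · exact hw6 hh.symm
          rw [hc3other w hwne1 hwne3] at hw2'
          exact ⟨hw1', hw2'⟩
        have hb := hH v2 hw3.symm hw4.symm _ hsub
        omega
    -- final coloring: recolor u5 to 4
    apply hG.1
    refine ⟨Function.update c u5 4, hcol_upd c hcol u5 4 (Or.inr rfl), ?_⟩
    have hc6u5 : Function.update c u5 4 u5 = 4 := Function.update_self u5 4 c
    have hc6other : ∀ w : V, w ≠ u5 → Function.update c u5 4 w = c w :=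
      fun w hh => Function.update_of_ne hh 4 c
    intro v
    rcases eq_or_ne u5 v with rfl | hvne5
    · exact hdeg2 u5 d5 _ (Or.inr hc6u5)
    rcases eq_or_ne u3 v with rfl | hvne3
    · exact hdeg2 u3 d3 _ (by rw [hc6other u3 e35]; exact hcol u3)
    rcases eq_or_ne u4 v with rfl | hvne4
    · have hcv : Function.update c u5 4 u4 = 3 := by rw [hc6other u4 e45]; exact hcu4
      have hsub : {w | G.Adj u4 w ∧ Function.update c u5 4 w = Function.update c u5 4 u4} ⊆
          {w | G.Adj u4 w ∧ c w = 3} \ {u5} := by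
        rintro w ⟨hw1, hw2⟩
        rw [hcv] at hw2
        have hwne5 : w ≠ u5 := by
          rintro rfl
          rw [hc6u5] at hw2
          omega
        rw [hc6other w hwne5] at hw2
        exact ⟨⟨hw1, hw2⟩, hwne5⟩
      have hb := Set.ncard_le_ncard hsub (Set.toFinite _)
      have hdm : ({w | G.Adj u4 w ∧ c w = 3} \ {u5}).ncard + 1 =
          {w | G.Adj u4 w ∧ c w = 3}.ncard :=
        Set.ncard_diff_singleton_add_one hu5S (Set.toFinite _)
      omega
    rcases eq_or_ne u6 v with rfl | hvne6
    · have hcv : Function.update c u5 4 u6 = c u6 := hc6other u6 (fun hh => e56 hh.symm)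
      have hsub : {w | G.Adj u6 w ∧ Function.update c u5 4 w = Function.update c u5 4 u6} ⊆
          {w | G.Adj u6 w ∧ c w = c u6} := by
        rintro w ⟨hw1, hw2⟩
        rw [hcv] at hw2
        have hwne5 : w ≠ u5 := by
          rintro rfl
          rw [hc6u5, hcu6] at hw2
          omega
        rw [hc6other w hwne5] at hw2
        exact ⟨hw1, hw2⟩
      have hb := hH u6 (fun hh => e36 hh.symm) (fun hh => e46 hh.symm) _ hsub
      omega
    · have hcv : Function.update c u5 4 v = c v := hc6other v hvne5.symm
      have hsub : {w | G.Adj v w ∧ Function.update c u5 4 w = Function.update c u5 4 v} ⊆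
          {w | G.Adj v w ∧ c w = c v} := by
        rintro w ⟨hw1, hw2⟩
        rw [hcv] at hw2
        have hwne5 : w ≠ u5 := by
          rintro rfl
          rcases hadj5 v hw1 with hh | hh
          · exact hvne4 hh.symm
          · exact hvne6 hh.symm
        rw [hc6other w hwne5] at hw2
        exact ⟨hw1, hw2⟩
      have hb := hH v hvne3.symm hvne4.symm _ hsub
      omega

/-- In a minimally non-(3,4)-colorable graph of girth at least 5, if
`u₁u₂u₃u₄u₅u₆` is a 6-cycle with `u₁, u₃, u₅` of degree 2 and `u₄` of degree 5,
then `u₂` and `u₆` both have degree at least 7. -/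
theorem stmt_9 {V : Type*} [Fintype V] (G : SimpleGraph V)
    (hG : MinNonColorable34 G) (hgirth : GirthAtLeast5 G)
    (u1 u2 u3 u4 u5 u6 : V)
    (hnd : ([u1, u2, u3, u4, u5, u6] : List V).Nodup)
    (a12 : G.Adj u1 u2) (a23 : G.Adj u2 u3) (a34 : G.Adj u3 u4)
    (a45 : G.Adj u4 u5) (a56 : G.Adj u5 u6) (a61 : G.Adj u6 u1)
    (d1 : degN G u1 = 2) (d3 : degN G u3 = 2) (d5 : degN G u5 = 2)
    (d4 : degN G u4 = 5) :
    7 ≤ degN G u2 ∧ 7 ≤ degN G u6 := by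
  constructor
  · exact key_lemma G hG hgirth u1 u2 u3 u4 u5 u6 hnd a12 a23 a34 a45 a56 a61 d1 d3 d5 d4
  · apply key_lemma G hG hgirth u1 u6 u5 u4 u3 u2 ?_ a61.symm a56.symm a45.symm a34.symm
      a23.symm a12.symm d1 d5 d3 d4
    simp only [List.nodup_cons, List.mem_cons, List.not_mem_nil, or_false, List.nodup_nil,
      and_true, not_or, List.mem_singleton] at hnd ⊢
    tauto
end
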